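/- arXiv:2506.02953 — 8 statements merged into one kernel-verified Lean document; each statement's English description precedes it below -/
import Mathlib

section
/- Let R be a commutative ring with identity. Then γ_t(Γ(R)) = 1 if and only if Z(R) is an annihilator ideal, i.e., there exists a ∈ Z(R)* with Z(R) = ann(a). -/
/-- Vertices of the zero-divisor graph: nonzero zero-divisors. -/
def zdVerts (R : Type*) [CommRing R] : Set R :=
  {x | x ≠ 0 ∧ ∃ y ≠ 0, x * y = 0}

/-- The set of all zero-divisors (including 0 when R is nontrivial). -/
def zdSet (R : Type*) [CommRing R] : Set R :=
  {x | ∃ y ≠ 0, x * y = 0}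

/-- A dominating set of the zero-divisor graph Γ(R) (loops allowed: `x` is
adjacent to itself iff `x^2 = 0`). -/
def IsDomSet (R : Type*) [CommRing R] (X : Set R) : Prop :=
  X ⊆ zdVerts R ∧ ∀ v ∈ zdVerts R, v ∉ X → ∃ x ∈ X, x * v = 0

/-- A total dominating set of Γ(R): every vertex has a neighbor in `X`
(possibly itself, if looped). -/
def IsTotDomSet (R : Type*) [CommRing R] (X : Set R) : Prop :=
  X ⊆ zdVerts R ∧ ∀ v ∈ zdVerts R, ∃ x ∈ X, x * v = 0

/-- The domination number γ(Γ(R)), as a cardinal. -/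
noncomputable def domNum (R : Type*) [CommRing R] : Cardinal :=
  ⨅ X : {X : Set R // IsDomSet R X}, Cardinal.mk X.1

/-- The total domination number γ_t(Γ(R)), as a cardinal. -/
noncomputable def totDomNum (R : Type*) [CommRing R] : Cardinal :=
  ⨅ X : {X : Set R // IsTotDomSet R X}, Cardinal.mk X.1

/-- The zero-divisor graph as a simple graph (loops discarded), used for girth. -/
def zdGraph (R : Type*) [CommRing R] : SimpleGraph R where
  Adj r s := r ≠ s ∧ r ≠ 0 ∧ s ≠ 0 ∧ r * s = 0
  symm := by constructor; intro r s h; exact ⟨h.1.symm, h.2.2.1, h.2.1, by rw [mul_comm]; exact h.2.2.2⟩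
  loopless := by constructor; intro r h; exact h.1 rfl

theorem stmt_5 (R : Type*) [CommRing R] :
    totDomNum R = 1 ↔ ∃ a ∈ zdVerts R, {x : R | a * x = 0} = zdSet R := by
  constructor
  · intro h
    by_cases hne : Nonempty {X : Set R // IsTotDomSet R X}
    · have hmem : totDomNum R ∈
          Set.range (fun X : {X : Set R // IsTotDomSet R X} => Cardinal.mk X.1) :=
        csInf_mem (Set.range_nonempty _)
      obtain ⟨⟨X, hX⟩, hXeq⟩ := hmem
      rw [h] at hXeq
      have hsub : X.Subsingleton :=
        Cardinal.mk_le_one_iff_set_subsingleton.1 hXeq.le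
      obtain ⟨⟨a, haX⟩⟩ := Cardinal.mk_ne_zero_iff.1 (Cardinal.one_le_iff_ne_zero.1 hXeq.ge)
      have haV : (a : R) ∈ zdVerts R := hX.1 haX
      have hdom : ∀ v ∈ zdVerts R, (a : R) * v = 0 := by
        intro v hv
        obtain ⟨x, hxX, hxv⟩ := hX.2 v hv
        have : x = (a : R) := hsub hxX haX
        rwa [this] at hxv
      refine ⟨a, haV, ?_⟩
      ext x
      constructor
      · intro hx
        exact ⟨a, haV.1, by rwa [mul_comm]⟩
      · intro hx
        by_cases hx0 : x = 0
        · simp [hx0]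
        · exact hdom x ⟨hx0, hx⟩
    · have := not_nonempty_iff.1 hne
      rw [totDomNum, iInf_of_isEmpty, Cardinal.sInf_empty] at h
      exact absurd h (by simp)
  · rintro ⟨a, haV, hann⟩
    have hTD : IsTotDomSet R {a} := by
      constructor
      · intro x hx; rw [Set.mem_singleton_iff] at hx; rw [hx]; exact haV
      · intro v hv
        refine ⟨a, rfl, ?_⟩
        have : v ∈ zdSet R := hv.2
        rw [← hann] at this
        exact this
    have hle : totDomNum R ≤ 1 := by
      have := ciInf_le' (fun X : {X : Set R // IsTotDomSet R X} => Cardinal.mk X.1)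
        ⟨{a}, hTD⟩
      simp at this; exact this
    have hge : 1 ≤ totDomNum R := by
      have : Nonempty {X : Set R // IsTotDomSet R X} := ⟨⟨{a}, hTD⟩⟩
      refine le_ciInf fun X => ?_
      obtain ⟨x, hxX, _⟩ := X.2.2 a haV
      exact Cardinal.one_le_iff_ne_zero.2 (Cardinal.mk_ne_zero_iff.2 ⟨⟨x, hxX⟩⟩)
    exact le_antisymm hle hge
end

section
/- Let R be a commutative ring. If γ_t(Γ(R)) = 2 and R is not isomorphic to Z₂ × D for any domain D, then γ(Γ(R)) = 2. -/
universe u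

section AL
variable {R : Type u} [CommRing R]


/-- Anderson–Livingston: a vertex `e` with `e*e ≠ 0` dominating all other vertices
yields `R ≃+* ZMod 2 × D` for a domain `D`. -/
theorem AL_iso (e : R) (he0 : e ≠ 0) (hy : ∃ y ≠ 0, e * y = 0)
    (hdom : ∀ v : R, v ≠ 0 → (∃ y ≠ 0, v * y = 0) → v ≠ e → e * v = 0)
    (hsq : e * e ≠ 0) :
    ∃ (D : Type u) (_ : CommRing D) (_ : IsDomain D), Nonempty (R ≃+* ZMod 2 × D) := by
  obtain ⟨y, hy0, hey⟩ := hy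
  -- e is idempotent
  have hidem : e * e = e := by
    by_contra hne
    have h3 : e * (e * e) = 0 := by
      apply hdom (e * e) hsq ⟨y, hy0, by rw [mul_assoc, hey, mul_zero]⟩ hne
    -- z = e + e*e
    have hz0 : e + e * e ≠ 0 := by
      intro h
      have : e * e = -e := by linear_combination h
      exact hsq (by linear_combination e*h - h3)
    have hzz : (e + e * e) * (e * e) = 0 := by
      have h4 : e * e * (e * e) = 0 := by
        calc e * e * (e * e) = e * (e * (e*e)) := by ring
        _ = 0 := by rw [h3, mul_zero]
      calc (e + e * e) * (e * e) = e * (e*e) + e*e*(e*e) := by ring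
      _ = 0 := by rw [h3, h4, add_zero]
    have hzne : e + e * e ≠ e := fun h => hsq (by linear_combination h)
    have := hdom (e + e*e) hz0 ⟨e*e, hsq, hzz⟩ hzne
    apply hsq
    have h5 : e*e + e*(e*e) = 0 := by linear_combination this
    rw [h3] at h5; linear_combination h5
  have he1 : (1 : R) - e ≠ 0 := by
    intro h
    have : e = 1 := by linear_combination -h
    rw [this, one_mul] at hey; exact hy0 hey
  -- e*r ∈ {0, e}
  have hcases : ∀ r : R, e * r = 0 ∨ e * r = e := by
    intro r
    by_contra h
    push_neg at h
    obtain ⟨h1, h2⟩ := h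
    have : e * (e * r) = 0 := by
      apply hdom (e*r) h1 ⟨1 - e, he1, by linear_combination (-r) * hidem⟩ h2
    apply h1
    calc e * r = (e*e) * r := by rw [hidem]
    _ = e * (e * r) := by ring
    _ = 0 := this
  -- no two elements killed by e multiply to zero
  have hkey : ∀ a b : R, e * a = 0 → e * b = 0 → a ≠ 0 → b ≠ 0 → a * b = 0 → False := by
    intro a b hea heb ha hb hab
    have hz : (a + e) * b = 0 := by
      calc (a+e)*b = a*b + e*b := by ring
      _ = 0 := by rw [hab, heb, add_zero]
    have hzn0 : a + e ≠ 0 := by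
      intro h
      have : e * (a + e) = 0 := by rw [h, mul_zero]
      rw [mul_add, hea, zero_add, hidem] at this
      exact he0 this
    have hzne : a + e ≠ e := by
      intro h
      have : a = 0 := by linear_combination h
      exact ha this
    have := hdom (a + e) hzn0 ⟨b, hb, hz⟩ hzne
    rw [mul_add, hea, zero_add, hidem] at this
    exact he0 this
  -- 2e = 0
  have h2e : e + e = 0 := by
    rcases hcases 2 with h | h
    · linear_combination h
    · exfalso; exact he0 (by linear_combination h)
  -- the ideal J = span {e}
  set J : Ideal R := Ideal.span {e} with hJ
  have hmemJ : ∀ r : R, r ∈ J ↔ e * r = r := by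
    intro r
    rw [hJ, Ideal.mem_span_singleton]
    constructor
    · rintro ⟨c, rfl⟩; calc e * (e * c) = (e*e)*c := by ring
      _ = e * c := by rw [hidem]
    · intro h; exact ⟨r, h.symm⟩
  have hprime : J.IsPrime := by
    constructor
    · intro h
      have h1 : (1:R) ∈ J := h ▸ Submodule.mem_top
      rw [hmemJ, mul_one] at h1
      rw [h1, one_mul] at hey; exact hy0 hey
    · intro a b hab
      by_contra h
      push_neg at h
      obtain ⟨ha, hb⟩ := h
      rw [hmemJ] at hab ha hb
      have ha' : a - e*a ≠ 0 := fun h => ha (by linear_combination -h)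
      have hb' : b - e*b ≠ 0 := fun h => hb (by linear_combination -h)
      apply hkey (a - e*a) (b - e*b)
        (by linear_combination (-a) * hidem)
        (by linear_combination (-b) * hidem) ha' hb'
      calc (a - e*a) * (b - e*b) = a*b - e*(a*b) - (e*(a*b) - e*e*(a*b)) := by ring
      _ = 0 := by rw [hidem, hab]; ring
  classical
  have h10 : (0:R) ≠ e := fun h => he0 h.symm
  have hmul1 : ∀ r s : R, e * (r * s) = (e * r) * (e * s) := by
    intro r s; calc e * (r*s) = (e*e) * (r*s) := by rw [hidem]
    _ = (e*r)*(e*s) := by ring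
  let chi : R → ZMod 2 := fun r => if e * r = e then 1 else 0
  have hchi : ∀ r s : R, e * r = e * s → chi r = chi s := by
    intro r s h
    simp only [chi, h]
  let f : R →+* ZMod 2 × (R ⧸ J) :=
  { toFun := fun r => (chi r, Ideal.Quotient.mk J r)
    map_one' := by
      have h : chi 1 = 1 := by simp only [chi, mul_one, if_pos rfl, if_true]
      show (chi 1, Ideal.Quotient.mk J 1) = 1
      rw [h, map_one]; rfl
    map_mul' := by
      intro r s
      have hfst : chi (r * s) = chi r * chi s := by
        rcases hcases r with hr | hr
        · have hrs : e * (r * s) = 0 := by rw [hmul1, hr, zero_mul]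
          simp only [chi, hrs, if_neg h10, if_neg (hr ▸ h10 : e * r ≠ e), zero_mul]
        · rcases hcases s with hs | hs
          · have hrs : e * (r * s) = 0 := by rw [hmul1, hs, mul_zero]
            simp only [chi, hrs, if_neg h10, if_neg (hs ▸ h10 : e * s ≠ e), mul_zero]
          · have hrs : e * (r * s) = e := by rw [hmul1, hr, hs, hidem]
            simp only [chi, hrs, hr, hs, if_pos rfl, if_true, mul_one]
      show (chi (r*s), Ideal.Quotient.mk J (r*s)) = _
      rw [hfst, map_mul]; rfl
    map_zero' := by
      have h : chi 0 = 0 := by simp only [chi, mul_zero, if_neg h10]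
      show (chi 0, Ideal.Quotient.mk J 0) = 0
      rw [h, map_zero]; rfl
    map_add' := by
      intro r s
      have hfst : chi (r + s) = chi r + chi s := by
        have hadd : e * (r + s) = e*r + e*s := mul_add e r s
        rcases hcases r with hr | hr <;> rcases hcases s with hs | hs
        · have : e * (r + s) = 0 := by rw [hadd, hr, hs, add_zero]
          simp only [chi, this, if_neg h10, if_neg (hr ▸ h10 : e * r ≠ e),
            if_neg (hs ▸ h10 : e * s ≠ e), add_zero]
        · have : e * (r + s) = e := by rw [hadd, hr, hs, zero_add]
          simp only [chi, this, if_pos rfl, if_true, if_neg (hr ▸ h10 : e * r ≠ e), hs, zero_add]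
        · have : e * (r + s) = e := by rw [hadd, hr, hs, add_zero]
          simp only [chi, this, if_pos rfl, if_true, if_neg (hs ▸ h10 : e * s ≠ e), hr, add_zero]
        · have : e * (r + s) = 0 := by rw [hadd, hr, hs, h2e]
          simp only [chi, this, if_neg h10, hr, hs, if_pos rfl, if_true]
          decide
      show (chi (r+s), Ideal.Quotient.mk J (r+s)) = _
      rw [hfst, map_add]; rfl }
  have hf : ∀ r : R, f r = (chi r, Ideal.Quotient.mk J r) := fun r => rfl
  have hinj : Function.Injective f := by
    intro a b hab
    rw [hf, hf] at hab
    have h1 : chi a = chi b := congrArg Prod.fst hab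
    have h2 : Ideal.Quotient.mk J a = Ideal.Quotient.mk J b := congrArg Prod.snd hab
    have hJab : e * (a - b) = a - b := (hmemJ _).mp (Ideal.Quotient.eq.mp h2)
    have heab : e * a = e * b := by
      rcases hcases a with ha | ha <;> rcases hcases b with hb | hb
      · rw [ha, hb]
      · exfalso
        simp only [chi, if_neg (ha ▸ h10 : e * a ≠ e), if_pos hb] at h1
        exact one_ne_zero h1.symm
      · exfalso
        simp only [chi, if_pos ha, if_neg (hb ▸ h10 : e * b ≠ e)] at h1
        exact one_ne_zero h1
      · rw [ha, hb]
    have hz : a - b = 0 := by rw [← hJab, mul_sub, heab, sub_self]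
    exact sub_eq_zero.mp hz
  have hsurj : Function.Surjective f := by
    rintro ⟨t, q⟩
    obtain ⟨s, rfl⟩ := Ideal.Quotient.mk_surjective q
    have ht : ∀ u : ZMod 2, u = 0 ∨ u = 1 := by decide
    rcases ht t with rfl | rfl
    · refine ⟨s - e*s, ?_⟩
      rw [hf]
      have hc : chi (s - e*s) = 0 := by
        have h : e * (s - e*s) = 0 := by linear_combination (-s) * hidem
        simp only [chi, h, if_neg h10]
      rw [hc]
      have : Ideal.Quotient.mk J (s - e*s) = Ideal.Quotient.mk J s := by
        rw [Ideal.Quotient.eq, hmemJ]; linear_combination (-s) * hidem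
      rw [this]
    · refine ⟨s - e*s + e, ?_⟩
      rw [hf]
      have hc : chi (s - e*s + e) = 1 := by
        have h : e * (s - e*s + e) = e := by linear_combination (1 - s) * hidem
        simp only [chi, h, if_pos rfl, if_true]
      rw [hc]
      have : Ideal.Quotient.mk J (s - e*s + e) = Ideal.Quotient.mk J s := by
        rw [Ideal.Quotient.eq, hmemJ]; linear_combination (1-s) * hidem
      rw [this]
  exact ⟨R ⧸ J, inferInstance, Ideal.Quotient.isDomain J,
    ⟨RingEquiv.ofBijective f ⟨hinj, hsurj⟩⟩⟩
end AL

theorem stmt_7 (R : Type u) [CommRing R]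
    (h2 : totDomNum R = 2)
    (hni : ∀ (D : Type u) [CommRing D] [IsDomain D], ¬ Nonempty (R ≃+* ZMod 2 × D)) :
    domNum R = 2 := by
  classical
  -- the total-domination index type is nonempty
  have hne : Nonempty {X : Set R // IsTotDomSet R X} := by
    by_contra h
    rw [not_nonempty_iff] at h
    have h0 : totDomNum R = 0 := by
      rw [totDomNum, iInf, Set.range_eq_empty, Cardinal.sInf_empty]
    rw [h0] at h2
    exact two_ne_zero h2.symm
  have hle : ∀ Y : Set R, IsTotDomSet R Y → (2 : Cardinal) ≤ Cardinal.mk Y := by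
    intro Y hY
    calc (2 : Cardinal) = totDomNum R := h2.symm
    _ ≤ Cardinal.mk Y := ciInf_le (OrderBot.bddBelow _) (⟨Y, hY⟩ : {X : Set R // IsTotDomSet R X})
  obtain ⟨⟨Y0, hY0⟩⟩ := hne
  have hY0ne : Y0.Nonempty := by
    rcases Y0.eq_empty_or_nonempty with h | h
    · exfalso
      have := hle Y0 hY0
      rw [h] at this
      simp at this
    · exact h
  obtain ⟨v0, hv0⟩ := hY0ne
  have hv0' : v0 ∈ zdVerts R := hY0.1 hv0
  -- every dominating set contains two distinct elements
  have hpair : ∀ X : Set R, IsDomSet R X → ∃ a ∈ X, ∃ b ∈ X, a ≠ b := by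
    intro X hX
    by_contra h
    push_neg at h
    rcases Set.eq_empty_or_nonempty X with rfl | ⟨x, hx⟩
    · obtain ⟨w, hw, -⟩ := hX.2 v0 hv0' (Set.notMem_empty v0)
      exact Set.notMem_empty w hw
    · have hxv : x ∈ zdVerts R := hX.1 hx
      have hdomx : ∀ v ∈ zdVerts R, v ≠ x → x * v = 0 := by
        intro v hv hvx
        have hvX : v ∉ X := fun hvX => hvx (h v hvX x hx)
        obtain ⟨w, hwX, hwv⟩ := hX.2 v hv hvX
        have hwx : w = x := h w hwX x hx
        rwa [hwx] at hwv
      by_cases hx2 : x * x = 0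
      · -- {x} is a total dominating set of size 1
        have htd : IsTotDomSet R {x} := by
          constructor
          · rw [Set.singleton_subset_iff]; exact hxv
          · intro v hv
            by_cases hvx : v = x
            · exact ⟨x, rfl, by rw [hvx]; exact hx2⟩
            · exact ⟨x, rfl, hdomx v hv hvx⟩
        have h1 := hle {x} htd
        rw [Cardinal.mk_singleton] at h1
        norm_num at h1
      · -- x is a non-looped universal vertex: Anderson–Livingston
        obtain ⟨hx0, hxy⟩ := hxv
        obtain ⟨D, hD1, hD2, hiso⟩ :=
          AL_iso x hx0 hxy (fun v hv0 hvzd hvx => hdomx v ⟨hv0, hvzd⟩ hvx) hx2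
        exact hni D hiso
  -- lower bound
  have hY0dom : IsDomSet R Y0 := ⟨hY0.1, fun v hv _ => hY0.2 v hv⟩
  have hlow : (2 : Cardinal) ≤ domNum R := by
    haveI : Nonempty {X : Set R // IsDomSet R X} := ⟨⟨Y0, hY0dom⟩⟩
    refine le_ciInf fun X => ?_
    obtain ⟨a, ha, b, hb, hab⟩ := hpair X.1 X.2
    exact Cardinal.two_le_iff.mpr
      ⟨⟨a, ha⟩, ⟨b, hb⟩, fun hh => hab (congrArg Subtype.val hh)⟩
  -- upper bound
  have hup : domNum R ≤ 2 := by
    haveI : Nonempty {X : Set R // IsTotDomSet R X} := ⟨⟨Y0, hY0⟩⟩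
    have h' : domNum R ≤ totDomNum R := by
      refine le_ciInf fun Y => ?_
      have hYdom : IsDomSet R Y.1 := ⟨Y.2.1, fun v hv _ => Y.2.2 v hv⟩
      exact ciInf_le (OrderBot.bddBelow _) (⟨Y.1, hYdom⟩ : {X : Set R // IsDomSet R X})
    rwa [h2] at h'
  exact le_antisymm hup hlow
end

section
/- Let R be a commutative ring. If γ_t(Γ(R)) ≥ 3, then the girth of Γ(R) is 3 (i.e., Γ(R) contains a 3-cycle). -/
open SimpleGraph in
lemma tri_egirth {α : Type*} {G : SimpleGraph α} {x y z : α}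
    (hxy : G.Adj x y) (hyz : G.Adj y z) (hzx : G.Adj z x) : G.egirth = 3 := by
  refine le_antisymm ?_ three_le_egirth
  have hc : (Walk.cons hxy (Walk.cons hyz (Walk.cons hzx Walk.nil))).IsCycle := by
    simp [Walk.isCycle_def, Walk.isTrail_def, hxy.ne, hyz.ne, hzx.ne, hxy.ne', hyz.ne', hzx.ne',
      Sym2.eq, Sym2.rel_iff']
  calc G.egirth ≤ _ := iInf_le _ x
    _ ≤ _ := iInf_le _ (Walk.cons hxy (Walk.cons hyz (Walk.cons hzx Walk.nil)))
    _ ≤ _ := iInf_le _ hc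
    _ ≤ 3 := by simp


section Alg
variable {R : Type*} [CommRing R]

lemma loop_triangle
    (star : ∀ a b : R, a ∈ zdVerts R → b ∈ zdVerts R →
      ∃ v ∈ zdVerts R, a * v ≠ 0 ∧ b * v ≠ 0)
    {a : R} (ha : a ≠ 0) (ha2 : a * a = 0) :
    ∃ x y z : R, x ≠ y ∧ y ≠ z ∧ z ≠ x ∧ x ≠ 0 ∧ y ≠ 0 ∧ z ≠ 0 ∧
      x * y = 0 ∧ y * z = 0 ∧ z * x = 0 := by
  have haV : a ∈ zdVerts R := ⟨ha, a, ha, ha2⟩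
  by_cases hI : ∃ x : R, a * x ≠ 0 ∧ a * x ≠ a ∧ a * x ≠ -a
  · obtain ⟨x, h1, h2, h3⟩ := hI
    refine ⟨a, a * x, a + a * x, fun h => h2 h.symm, ?_, ?_, ha, h1, ?_, ?_, ?_, ?_⟩
    · intro h; apply ha; linear_combination -h
    · intro h; apply h1; linear_combination h
    · intro h; apply h3; linear_combination h
    · linear_combination x * ha2
    · linear_combination (x + x * x) * ha2
    · linear_combination (1 + x) * ha2
  · push_neg at hI
    by_cases hneg : -a = a
    · -- char-2-like case : ∀ x, a*x ≠ 0 → a*x = a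
      have h2 : ∀ x : R, a * x ≠ 0 → a * x = a := by
        intro x hx
        by_cases hxa : a * x = a
        · exact hxa
        · rw [hI x hx hxa, hneg]
      obtain ⟨p, hpV, hap, -⟩ := star a a haV haV
      obtain ⟨hp0, y, hy0, hpy⟩ := hpV
      have hap' : a * p = a := h2 p hap
      have hay : a * y = 0 := by linear_combination (-y) * hap' + a * hpy
      have hya : y ≠ a := by
        intro h; apply hap; rw [h] at hpy; linear_combination hpy
      have hyV : y ∈ zdVerts R := ⟨hy0, a, ha, by linear_combination hay⟩
      obtain ⟨u, huV, hau, hyu⟩ := star a y haV hyV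
      obtain ⟨hu0, m, hm0, hum⟩ := huV
      have hau' : a * u = a := h2 u hau
      have ham : a * m = 0 := by linear_combination (-m) * hau' + a * hum
      have hma : m ≠ a := by
        intro h; apply hau; rw [h] at hum; linear_combination hum
      have hw0 : y * u ≠ 0 := hyu
      have haw : a * (y * u) = 0 := by linear_combination u * hay
      have hwm : (y * u) * m = 0 := by linear_combination y * hum
      have hwa : y * u ≠ a := by
        intro h; apply hap; rw [← h]; linear_combination u * hpy
      by_cases hwm0 : y * u = m
      · -- then m*m = 0; triangle (a, m, a+m)
        have hm2 : m * m = 0 := by rw [← hwm0]; rw [hwm0] at hwm ⊢; exact hwm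
        refine ⟨a, m, a + m, fun h => hma h.symm, ?_, ?_, ha, hm0, ?_, ?_, ?_, ?_⟩
        · intro h; apply ha; linear_combination -h
        · intro h; apply hm0; linear_combination h
        · intro h; apply hma; linear_combination h + hneg
        · exact ham
        · linear_combination ham + hm2
        · linear_combination ha2 + ham
      · -- triangle (a, y*u, m)
        exact ⟨a, y * u, m, fun h => hwa h.symm, hwm0, hma, ha, hw0, hm0,
          haw, hwm, by linear_combination ham⟩
    · -- -a ≠ a : triangle (a, -a, y)
      obtain ⟨v, hvV, hav, -⟩ := star a a haV haV
      obtain ⟨hv0, y, hy0, hvy⟩ := hvV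
      have hay : a * y = 0 := by
        by_cases hva : a * v = a
        · calc a * y = (a * v) * y := by rw [hva]
            _ = 0 := by linear_combination a * hvy
        · have h3 := hI v hav hva
          have : (-a) * y = 0 := by rw [← h3]; linear_combination a * hvy
          linear_combination -this
      have hya : y ≠ a := by
        intro h; apply hav; rw [h] at hvy; linear_combination hvy
      have hyna : y ≠ -a := by
        intro h; apply hav; rw [h] at hvy; linear_combination -hvy
      refine ⟨a, -a, y, fun h => hneg h.symm, fun h => hyna h.symm, hya, ha, ?_, hy0,
        ?_, ?_, ?_⟩
      · intro h; apply ha; linear_combination -h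
      · linear_combination -ha2
      · linear_combination -hay
      · linear_combination hay

lemma zd_triangle
    (star : ∀ a b : R, a ∈ zdVerts R → b ∈ zdVerts R →
      ∃ v ∈ zdVerts R, a * v ≠ 0 ∧ b * v ≠ 0)
    (hne : (zdVerts R).Nonempty) :
    ∃ x y z : R, x ≠ y ∧ y ≠ z ∧ z ≠ x ∧ x ≠ 0 ∧ y ≠ 0 ∧ z ≠ 0 ∧
      x * y = 0 ∧ y * z = 0 ∧ z * x = 0 := by
  by_cases hloop : ∃ e : R, e ≠ 0 ∧ e * e = 0
  · obtain ⟨e, he, he2⟩ := hloop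
    exact loop_triangle star he he2
  · push_neg at hloop
    obtain ⟨p, hp0, q, hq0, hpq⟩ := hne
    have hpV : p ∈ zdVerts R := ⟨hp0, q, hq0, hpq⟩
    have hqV : q ∈ zdVerts R := ⟨hq0, p, hp0, by linear_combination hpq⟩
    obtain ⟨v, hvV, hpv, hqv⟩ := star p q hpV hqV
    obtain ⟨hv0, w, hw0, hvw⟩ := hvV
    have hab : (p * v) * (q * v) = 0 := by linear_combination v * v * hpq
    have haw : (p * v) * w = 0 := by linear_combination p * hvw
    have hbw : (q * v) * w = 0 := by linear_combination q * hvw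
    have h1 : p * v ≠ q * v := by
      intro h; exact hloop (p * v) hpv (by rw [h] at hab ⊢; exact hab)
    have h2 : q * v ≠ w := by
      intro h; apply hloop (q * v) hqv; rw [h] at hbw ⊢; exact hbw
    have h3 : w ≠ p * v := by
      intro h; apply hloop (p * v) hpv; rw [← h] at haw ⊢; exact haw
    exact ⟨p * v, q * v, w, h1, h2, h3, hpv, hqv, hw0, hab, hbw, by linear_combination haw⟩

end Alg


theorem stmt_9 (R : Type*) [CommRing R] (h : 3 ≤ totDomNum R) :
    (zdGraph R).egirth = 3 := by
  have star : ∀ a b : R, a ∈ zdVerts R → b ∈ zdVerts R →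
      ∃ v ∈ zdVerts R, a * v ≠ 0 ∧ b * v ≠ 0 := by
    intro a b ha hb
    by_contra hc
    push_neg at hc
    have htd : IsTotDomSet R {a, b} := by
      constructor
      · intro x hx
        rcases hx with rfl | hx
        · exact ha
        · rw [Set.mem_singleton_iff] at hx; subst hx; exact hb
      · intro v hv
        by_cases hav : a * v = 0
        · exact ⟨a, Set.mem_insert _ _, hav⟩
        · exact ⟨b, Set.mem_insert_of_mem _ rfl, hc v hv hav⟩
    have hle : totDomNum R ≤ Cardinal.mk ({a, b} : Set R) :=
      ciInf_le' _ (⟨{a, b}, htd⟩ : {X : Set R // IsTotDomSet R X})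
    have h2 : Cardinal.mk ({a, b} : Set R) ≤ 2 := by
      calc Cardinal.mk ({a, b} : Set R) ≤ Cardinal.mk ({b} : Set R) + 1 :=
            Cardinal.mk_insert_le
        _ = 2 := by rw [Cardinal.mk_singleton]; norm_num
    have h3 := h.trans (hle.trans h2)
    norm_num at h3
  have hne : (zdVerts R).Nonempty := by
    rw [Set.nonempty_iff_ne_empty]
    intro hemp
    have htd : IsTotDomSet R (∅ : Set R) :=
      ⟨Set.empty_subset _, fun v hv => by rw [hemp] at hv; exact absurd hv (Set.notMem_empty v)⟩
    have hle : totDomNum R ≤ Cardinal.mk (∅ : Set R) :=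
      ciInf_le' _ (⟨∅, htd⟩ : {X : Set R // IsTotDomSet R X})
    rw [Cardinal.mk_emptyCollection] at hle
    have h3 := h.trans hle
    norm_num at h3
  obtain ⟨x, y, z, hxy, hyz, hzx, hx0, hy0, hz0, mxy, myz, mzx⟩ := zd_triangle star hne
  exact tri_egirth (G := zdGraph R) ⟨hxy, hx0, hy0, mxy⟩ ⟨hyz, hy0, hz0, myz⟩
    ⟨hzx, hz0, hx0, mzx⟩
end

section
/- Let R be a commutative ring. If the girth of Γ(R) is 4 or ∞, then either γ_t(Γ(R)) = γ(Γ(R)) or R ≅ Z₂ × D for some domain D. -/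
section AuxZD

variable {R : Type*} [CommRing R]

lemma zd_mem_zdVerts {x : R} : x ∈ zdVerts R ↔ x ≠ 0 ∧ ∃ y, y ≠ 0 ∧ x * y = 0 :=
  Iff.rfl

lemma zd_isTotDomSet_verts : IsTotDomSet R (zdVerts R) := by
  refine ⟨le_refl _, ?_⟩
  intro v hv
  obtain ⟨hv0, y, hy0, hvy⟩ := zd_mem_zdVerts.mp hv
  exact ⟨y, zd_mem_zdVerts.mpr ⟨hy0, v, hv0, by rw [mul_comm]; exact hvy⟩,
    by rw [mul_comm]; exact hvy⟩

lemma zd_tot_isDom {X : Set R} (h : IsTotDomSet R X) : IsDomSet R X :=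
  ⟨h.1, fun v hv _ => h.2 v hv⟩

instance zd_nonempty_tot : Nonempty {X : Set R // IsTotDomSet R X} :=
  ⟨⟨zdVerts R, zd_isTotDomSet_verts⟩⟩

lemma zd_domNum_le {X : Set R} (h : IsDomSet R X) : domNum R ≤ Cardinal.mk X :=
  ciInf_le' (fun X : {X : Set R // IsDomSet R X} => Cardinal.mk X.1) ⟨X, h⟩

lemma zd_totDomNum_le {X : Set R} (h : IsTotDomSet R X) : totDomNum R ≤ Cardinal.mk X :=
  ciInf_le' (fun X : {X : Set R // IsTotDomSet R X} => Cardinal.mk X.1) ⟨X, h⟩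

lemma zd_domNum_le_totDomNum : domNum R ≤ totDomNum R :=
  le_ciInf fun X => zd_domNum_le (zd_tot_isDom X.2)

lemma noTriangle
    (h : (zdGraph R).egirth = 4 ∨ (zdGraph R).egirth = ⊤)
    {x y z : R} (hx : x ≠ 0) (hy : y ≠ 0) (hz : z ≠ 0)
    (hxy : x ≠ y) (hxz : x ≠ z) (hyz : y ≠ z)
    (h1 : x * y = 0) (h2 : x * z = 0) (h3 : y * z = 0) : False := by
  have h4 : (4 : ℕ∞) ≤ (zdGraph R).egirth := by
    rcases h with h | h <;> rw [h] <;> simp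
  have a1 : (zdGraph R).Adj x y := ⟨hxy, hx, hy, h1⟩
  have a2 : (zdGraph R).Adj y z := ⟨hyz, hy, hz, h3⟩
  have a3 : (zdGraph R).Adj z x := ⟨fun hh => hxz hh.symm, hz, hx, by rw [mul_comm]; exact h2⟩
  let w : (zdGraph R).Walk x x := .cons a1 (.cons a2 (.cons a3 .nil))
  have hc : w.IsCycle := by
    rw [SimpleGraph.Walk.isCycle_def]
    refine ⟨⟨?_⟩, by simp [w], ?_⟩
    · simp [w, Sym2.eq_iff]
      tauto
    · simp [w]
      tauto
  have hle := SimpleGraph.le_egirth.mp h4 x w hc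
  have hlen : w.length = 3 := rfl
  rw [hlen] at hle
  norm_num at hle

/-- The key combinatorial lemma: triangle-free plus no dominating vertex gives an
adjacent pair whose annihilators cover all vertices. -/
lemma zd_coverPair
    (T : ∀ x y z : R, x ≠ 0 → y ≠ 0 → z ≠ 0 → x ≠ y → x ≠ z → y ≠ z →
      x * y = 0 → x * z = 0 → y * z = 0 → False)
    (hne : (zdVerts R).Nonempty)
    (ND : ∀ x ∈ zdVerts R, ∃ v ∈ zdVerts R, v ≠ x ∧ x * v ≠ 0) :
    ∃ a b : R, a ∈ zdVerts R ∧ b ∈ zdVerts R ∧ a * b = 0 ∧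
      ∀ v ∈ zdVerts R, a * v = 0 ∨ b * v = 0 := by
  by_cases hsq : ∃ n : R, n ≠ 0 ∧ n * n = 0
  case neg =>
    -- reduced case: every edge covers
    push_neg at hsq
    obtain ⟨x₀, hx₀⟩ := hne
    obtain ⟨hx0, y, hy0, hxy⟩ := zd_mem_zdVerts.mp hx₀
    refine ⟨x₀, y, ⟨hx0, y, hy0, hxy⟩, ⟨hy0, x₀, hx0, by rw [mul_comm]; exact hxy⟩, hxy, ?_⟩
    intro v hv
    by_contra hcon
    push_neg at hcon
    obtain ⟨hva, hvb⟩ := hcon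
    obtain ⟨hv0, t, ht0, hvt⟩ := zd_mem_zdVerts.mp hv
    have hu0 : v * x₀ ≠ 0 := by rwa [mul_comm] at hva
    have hw0 : v * y ≠ 0 := by rwa [mul_comm] at hvb
    have huw : (v * x₀) * (v * y) = 0 := by linear_combination (v * v) * hxy
    have htu : t * (v * x₀) = 0 := by linear_combination x₀ * hvt
    have htw : t * (v * y) = 0 := by linear_combination y * hvt
    have hne1 : t ≠ v * x₀ := fun he => hsq (v * x₀) hu0 (by rw [he] at htu; exact htu)
    have hne2 : t ≠ v * y := fun he => hsq (v * y) hw0 (by rw [he] at htw; exact htw)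
    have hne3 : v * x₀ ≠ v * y := fun he => hsq (v * y) hw0 (by rw [he] at huw; exact huw)
    exact T t (v * x₀) (v * y) ht0 hu0 hw0 hne1 hne2 hne3 htu htw huw
  case pos =>
    obtain ⟨a, ha0, ha2⟩ := hsq
    have haZ : a ∈ zdVerts R := zd_mem_zdVerts.mpr ⟨ha0, a, ha0, ha2⟩
    -- Step V : v * a ≠ 0 → v * a = a ∨ v * a = -a
    have stepV : ∀ v : R, v * a ≠ 0 → v * a = a ∨ v * a = -a := by
      intro v hva
      have hca : (v * a) * a = 0 := by linear_combination v * ha2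
      have hcc : (v * a) * (v * a) = 0 := by linear_combination (v * v) * ha2
      by_cases hce : v * a = a
      · exact Or.inl hce
      by_cases hs0 : v * a + a = 0
      · right; linear_combination hs0
      exfalso
      have h1 : a * (v * a) = 0 := by linear_combination hca
      have h2 : a * (v * a + a) = 0 := by linear_combination hca + ha2
      have h3 : (v * a) * (v * a + a) = 0 := by linear_combination hcc + hca
      have d1 : a ≠ v * a := fun h => hce h.symm
      have d2 : a ≠ v * a + a := fun h => hva (by linear_combination h.symm)
      have d3 : v * a ≠ v * a + a := fun h => ha0 (by linear_combination h.symm)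
      exact T a (v * a) (v * a + a) ha0 hva hs0 d1 d2 d3 h1 h2 h3
    -- Step 1 : n * n = 0 → n = 0 ∨ n = a ∨ n = -a
    have step1 : ∀ n : R, n * n = 0 → n = 0 ∨ n = a ∨ n = -a := by
      intro n hn2
      by_cases hn0 : n = 0
      · exact Or.inl hn0
      right
      have hna : n * a = 0 := by
        by_contra hna
        have e1 : n * (n * a) = 0 := by linear_combination a * hn2
        rcases stepV n hna with h | h
        · rw [h] at e1; rw [h] at e1; exact ha0 e1
        · rw [h, mul_neg, neg_eq_zero, h, neg_eq_zero] at e1; exact ha0 e1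
      by_cases hne : n = a
      · exact Or.inl hne
      right
      by_cases hs0 : n + a = 0
      · linear_combination hs0
      exfalso
      have h1 : a * n = 0 := by linear_combination hna
      have h2 : a * (n + a) = 0 := by linear_combination hna + ha2
      have h3 : n * (n + a) = 0 := by linear_combination hn2 + hna
      have d1 : a ≠ n := fun h => hne h.symm
      have d2 : a ≠ n + a := fun h => hn0 (by linear_combination h.symm)
      have d3 : n ≠ n + a := fun h => ha0 (by linear_combination h.symm)
      exact T a n (n + a) ha0 hn0 hs0 d1 d2 d3 h1 h2 h3
    -- Step 2 : a + a = 0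
    have step2 : a + a = 0 := by
      by_contra h2
      have hAnn : ∀ t : R, t ≠ 0 → a * t = 0 → t = a ∨ t = -a := by
        intro t ht0 hat
        by_contra hcon
        push_neg at hcon
        have hnna : (-a) ≠ 0 := neg_ne_zero.mpr ha0
        have p1 : a * (-a) = 0 := by linear_combination (-1 : R) * ha2
        have p2 : (-a) * t = 0 := by linear_combination (-1 : R) * hat
        have d1 : a ≠ -a := fun h => h2 (by linear_combination h)
        have d2 : a ≠ t := fun h => hcon.1 h.symm
        have d3 : (-a) ≠ t := fun h => hcon.2 h.symm
        exact T a (-a) t ha0 hnna ht0 d1 d2 d3 p1 hat p2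
      obtain ⟨p, hpZ, hpa, hap⟩ := ND a haZ
      have hpa' : p * a ≠ 0 := by rwa [mul_comm]
      obtain ⟨hp0, t, ht0, hpt⟩ := zd_mem_zdVerts.mp hpZ
      have hat : a * t = 0 := by
        have e : (p * a) * t = 0 := by linear_combination a * hpt
        rcases stepV p hpa' with h | h
        · rwa [h] at e
        · rw [h, neg_mul, neg_eq_zero] at e; exact e
      rcases hAnn t ht0 hat with h | h
      · rw [h] at hpt; exact hpa' hpt
      · rw [h, mul_neg, neg_eq_zero] at hpt; exact hpa' hpt
    have hnegaa : -a = a := by linear_combination (-1 : R) * step2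
    have stepV' : ∀ v : R, v * a ≠ 0 → v * a = a := by
      intro v h
      rcases stepV v h with h' | h'
      · exact h'
      · rwa [hnegaa] at h'
    have step1' : ∀ n : R, n * n = 0 → n = 0 ∨ n = a := by
      intro n h
      rcases step1 n h with h' | h' | h'
      · exact Or.inl h'
      · exact Or.inr h'
      · rw [hnegaa] at h'; exact Or.inr h'
    -- the killer facts
    have hkill : ∀ v t : R, v * a = a → v * t = 0 → t ≠ 0 → a * t = 0 ∧ t ≠ a := by
      intro v t hva hvt ht0
      have hat : a * t = 0 := by linear_combination (-t) * hva + a * hvt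
      refine ⟨hat, ?_⟩
      intro he
      rw [he] at hvt
      rw [hva] at hvt
      exact ha0 hvt
    obtain ⟨v₀, hv0Z, hv0ne, hav0⟩ := ND a haZ
    have hv0a : v₀ * a = a := stepV' v₀ (by rwa [mul_comm])
    obtain ⟨hv00, t₀, ht00, hv0t0⟩ := zd_mem_zdVerts.mp hv0Z
    obtain ⟨hat0, ht0a⟩ := hkill v₀ t₀ hv0a hv0t0 ht00
    refine ⟨a, t₀, haZ, zd_mem_zdVerts.mpr ⟨ht00, a, ha0, by rw [mul_comm]; exact hat0⟩,
      hat0, ?_⟩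
    intro v hv
    by_cases hav : a * v = 0
    · exact Or.inl hav
    right
    have hva : v * a = a := stepV' v (by rwa [mul_comm])
    by_cases hvv0 : v = v₀
    · rw [hvv0, mul_comm]; exact hv0t0
    by_cases hvv0a : v = v₀ + a
    · rw [hvv0a]; linear_combination hv0t0 + hat0
    · exfalso
      obtain ⟨hvne0, t, ht0, hvt⟩ := zd_mem_zdVerts.mp hv
      obtain ⟨hat, hta⟩ := hkill v t hva hvt ht0
      -- produce a common killer w of v₀, v, and a
      obtain ⟨w, hw0, hwv0, hwv, hwa⟩ :
          ∃ w : R, w ≠ 0 ∧ w * v₀ = 0 ∧ w * v = 0 ∧ w * a = 0 := by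
        by_cases htt : t = t₀
        · exact ⟨t, ht0, by rw [htt, mul_comm]; exact hv0t0, by rw [mul_comm]; exact hvt,
            by rw [mul_comm]; exact hat⟩
        · refine ⟨t₀ * t, ?_, by linear_combination t * hv0t0, by linear_combination t₀ * hvt,
            by linear_combination t₀ * hat⟩
          intro h0
          have p2 : t₀ * a = 0 := by linear_combination hat0
          have p3 : t * a = 0 := by linear_combination hat
          exact T t₀ t a ht00 ht0 ha0 (fun hh => htt hh.symm) ht0a hta h0 p2 p3
      have hd0 : v - v₀ ≠ 0 := sub_ne_zero.mpr hvv0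
      have hda : v - v₀ ≠ a := fun hh => hvv0a (by linear_combination hh)
      have hdA : (v - v₀) * a = 0 := by rw [sub_mul, hva, hv0a, sub_self]
      have hwd : w * (v - v₀) = 0 := by rw [mul_sub, hwv, hwv0, sub_self]
      by_cases hwdq : w = v - v₀
      · have hdd : (v - v₀) * (v - v₀) = 0 := by rw [hwdq] at hwd; exact hwd
        rcases step1' (v - v₀) hdd with h | h
        · exact hd0 h
        · exact hda h
      · exact T w (v - v₀) a hw0 hd0 ha0 hwdq (fun hh => hav (by rw [hh] at hwv; exact hwv))
          hda hwd hwa hdA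

instance zd_nonempty_dom : Nonempty {X : Set R // IsDomSet R X} :=
  ⟨⟨zdVerts R, zd_tot_isDom zd_isTotDomSet_verts⟩⟩

end AuxZD

lemma zd_caseA2 {R : Type u} [CommRing R]
    (T : ∀ x y z : R, x ≠ 0 → y ≠ 0 → z ≠ 0 → x ≠ y → x ≠ z → y ≠ z →
      x * y = 0 → x * z = 0 → y * z = 0 → False)
    {e : R} (heZ : e ∈ zdVerts R)
    (hdom : ∀ v ∈ zdVerts R, v ≠ e → e * v = 0)
    (he2 : e * e ≠ 0) :
    ∃ (D : Type u) (_ : CommRing D) (_ : IsDomain D), Nonempty (R ≃+* ZMod 2 × D) := by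
  classical
  obtain ⟨he0, y, hy0, hey⟩ := zd_mem_zdVerts.mp heZ
  have he1 : e ≠ 1 := fun h => hy0 (by rw [h, one_mul] at hey; exact hey)
  -- idempotency
  have hee : e * e = e := by
    by_contra hne
    have hZ : e * e ∈ zdVerts R := ⟨he2, y, hy0, by linear_combination e * hey⟩
    have h3 : e * (e * e) = 0 := hdom (e * e) hZ hne
    have ht0 : e + e * e ≠ 0 := by
      intro hzero
      apply he2
      linear_combination e * hzero - h3
    have htZ : e + e * e ∈ zdVerts R :=
      ⟨ht0, e * e, he2, by linear_combination (1 + e) * h3⟩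
    have hte : e + e * e ≠ e := fun hh => he2 (by linear_combination hh)
    have hd := hdom _ htZ hte
    apply he2
    linear_combination hd - h3
  have hmul : ∀ r : R, r * e = 0 ∨ r * e = e := by
    intro r
    by_cases h0 : r * e = 0
    · exact Or.inl h0
    right
    by_contra hne
    have h1e : (1 : R) - e ≠ 0 := sub_ne_zero.mpr (Ne.symm he1)
    have hre : (r * e) * (1 - e) = 0 := by linear_combination (-r) * hee
    have hZ : r * e ∈ zdVerts R := ⟨h0, 1 - e, h1e, hre⟩
    have hd := hdom _ hZ hne
    apply h0
    linear_combination hd - r * hee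
  have h2e : e + e = 0 := by
    rcases hmul 2 with hh | hh
    · linear_combination hh
    · exfalso; apply he0; linear_combination hh
  have hprime : ∀ u v : R, u * (1 - e) ≠ 0 → v * (1 - e) ≠ 0 →
      u * v * (1 - e) = 0 → False := by
    intro u v hu hv huv
    have heu : e * (u * (1 - e)) = 0 := by linear_combination (-u) * hee
    have hev : e * (v * (1 - e)) = 0 := by linear_combination (-v) * hee
    have hue : u * (1 - e) ≠ e := fun hh => he2 (by rw [hh] at heu; exact heu)
    have hve : v * (1 - e) ≠ e := fun hh => he2 (by rw [hh] at hev; exact hev)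
    have huvz : (u * (1 - e)) * (v * (1 - e)) = 0 := by linear_combination (1 - e) * huv
    by_cases hq : u * (1 - e) = v * (1 - e)
    · have hdd : (u * (1 - e)) * (u * (1 - e)) = 0 := by rw [← hq] at huvz; exact huvz
      have htu : (u * (1 - e) + e) * (u * (1 - e)) = 0 := by linear_combination hdd + heu
      have ht0 : u * (1 - e) + e ≠ 0 := by
        intro hzero
        apply he2
        have hneg : u * (1 - e) = -e := by linear_combination hzero
        rw [hneg] at heu
        linear_combination (-1 : R) * heu
      have htZ : u * (1 - e) + e ∈ zdVerts R := ⟨ht0, u * (1 - e), hu, htu⟩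
      have hte : u * (1 - e) + e ≠ e := fun hh => hu (by linear_combination hh)
      have hd := hdom _ htZ hte
      apply he0
      linear_combination hd - heu - hee
    · exact T e (u * (1 - e)) (v * (1 - e)) he0 hu hv (Ne.symm hue) (Ne.symm hve) hq heu hev huvz
  -- the ideal generated by e
  have hmemI : ∀ r : R, r ∈ Ideal.span {e} ↔ r * (1 - e) = 0 := by
    intro r
    rw [Ideal.mem_span_singleton]
    constructor
    · rintro ⟨c, rfl⟩
      linear_combination (-c) * hee
    · intro hh
      exact ⟨r, by linear_combination hh⟩
  have hIprime : (Ideal.span {e} : Ideal R).IsPrime := by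
    constructor
    · intro htop
      have h1 : (1 : R) ∈ Ideal.span {e} := htop ▸ Submodule.mem_top
      have h2 := (hmemI 1).mp h1
      exact he1 (by linear_combination -h2)
    · intro u v huv
      by_contra hcon
      push_neg at hcon
      exact hprime u v (fun hh => hcon.1 ((hmemI u).mpr hh))
        (fun hh => hcon.2 ((hmemI v).mpr hh)) ((hmemI _).mp huv)
  haveI := hIprime
  let χ : R →+* ZMod 2 :=
  { toFun := fun r => if r * e = 0 then 0 else 1
    map_one' := by
      have h1 : ¬((1 : R) * e = 0) := by rw [one_mul]; exact he0
      show (if (1 : R) * e = 0 then (0 : ZMod 2) else 1) = 1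
      rw [if_neg h1]
    map_mul' := by
      intro r s
      show (if (r * s) * e = 0 then (0 : ZMod 2) else 1) =
        (if r * e = 0 then (0 : ZMod 2) else 1) * (if s * e = 0 then (0 : ZMod 2) else 1)
      rcases hmul r with hr | hr <;> rcases hmul s with hs | hs
      · have h1 : r * s * e = 0 := by linear_combination s * hr
        rw [if_pos h1, if_pos hr, if_pos hs]; decide
      · have h1 : r * s * e = 0 := by linear_combination s * hr
        rw [if_pos h1, if_pos hr, zero_mul]
      · have h1 : r * s * e = 0 := by linear_combination r * hs
        rw [if_pos h1, if_pos hs, mul_zero]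
      · have h1 : r * s * e = e := by linear_combination r * hs + hr
        have h1' : ¬(r * s * e = 0) := by rw [h1]; exact he0
        have hr' : ¬(r * e = 0) := by rw [hr]; exact he0
        have hs' : ¬(s * e = 0) := by rw [hs]; exact he0
        rw [if_neg h1', if_neg hr', if_neg hs']; decide
    map_zero' := by
      show (if (0 : R) * e = 0 then (0 : ZMod 2) else 1) = 0
      rw [if_pos (by rw [zero_mul])]
    map_add' := by
      intro r s
      show (if (r + s) * e = 0 then (0 : ZMod 2) else 1) =
        (if r * e = 0 then (0 : ZMod 2) else 1) + (if s * e = 0 then (0 : ZMod 2) else 1)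
      rcases hmul r with hr | hr <;> rcases hmul s with hs | hs
      · have h1 : (r + s) * e = 0 := by linear_combination hr + hs
        rw [if_pos h1, if_pos hr, if_pos hs]; decide
      · have h1 : (r + s) * e = e := by linear_combination hr + hs
        have h1' : ¬((r + s) * e = 0) := by rw [h1]; exact he0
        have hs' : ¬(s * e = 0) := by rw [hs]; exact he0
        rw [if_neg h1', if_pos hr, if_neg hs']; decide
      · have h1 : (r + s) * e = e := by linear_combination hr + hs
        have h1' : ¬((r + s) * e = 0) := by rw [h1]; exact he0
        have hr' : ¬(r * e = 0) := by rw [hr]; exact he0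
        rw [if_neg h1', if_neg hr', if_pos hs]; decide
      · have h1 : (r + s) * e = 0 := by linear_combination hr + hs + h2e
        have hr' : ¬(r * e = 0) := by rw [hr]; exact he0
        have hs' : ¬(s * e = 0) := by rw [hs]; exact he0
        rw [if_pos h1, if_neg hr', if_neg hs']; decide }
  let φ : R →+* ZMod 2 × (R ⧸ Ideal.span {e}) := χ.prod (Ideal.Quotient.mk _)
  have hinj : Function.Injective φ := by
    rw [injective_iff_map_eq_zero]
    intro r hr
    have h1 : χ r = 0 := congrArg Prod.fst hr
    have h2 : Ideal.Quotient.mk (Ideal.span {e}) r = 0 := congrArg Prod.snd hr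
    have hre : r * e = 0 := by
      by_contra hc
      have h3 : χ r = 1 := by
        show (if r * e = 0 then (0 : ZMod 2) else 1) = 1
        rw [if_neg hc]
      rw [h3] at h1
      exact one_ne_zero h1
    have hrI : r * (1 - e) = 0 := (hmemI r).mp (Ideal.Quotient.eq_zero_iff_mem.mp h2)
    linear_combination hre + hrI
  have hsurj : Function.Surjective φ := by
    rintro ⟨b, q⟩
    obtain ⟨s, rfl⟩ := Ideal.Quotient.mk_surjective q
    have hball : ∀ c : ZMod 2, c = 0 ∨ c = 1 := by decide
    have hse : s * e ∈ Ideal.span {e} := (hmemI _).mpr (by linear_combination (-s) * hee)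
    have heI : e ∈ Ideal.span {e} := Ideal.mem_span_singleton_self e
    have h5 : (Ideal.Quotient.mk (Ideal.span {e})) (s * e) = 0 :=
      Ideal.Quotient.eq_zero_iff_mem.mpr hse
    have h6 : (Ideal.Quotient.mk (Ideal.span {e})) e = 0 :=
      Ideal.Quotient.eq_zero_iff_mem.mpr heI
    rcases hball b with rfl | rfl
    · refine ⟨s - s * e, ?_⟩
      have hc : (s - s * e) * e = 0 := by linear_combination (-s) * hee
      apply Prod.ext
      · show (if (s - s * e) * e = 0 then (0 : ZMod 2) else 1) = 0
        rw [if_pos hc]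
      · show (Ideal.Quotient.mk (Ideal.span {e})) (s - s * e) = _
        rw [map_sub, h5, sub_zero]
    · refine ⟨s - s * e + e, ?_⟩
      have hc : (s - s * e + e) * e = e := by linear_combination (1 - s) * hee
      have hc' : ¬((s - s * e + e) * e = 0) := by rw [hc]; exact he0
      apply Prod.ext
      · show (if (s - s * e + e) * e = 0 then (0 : ZMod 2) else 1) = 1
        rw [if_neg hc']
      · show (Ideal.Quotient.mk (Ideal.span {e})) (s - s * e + e) = _
        rw [map_add, map_sub, h5, h6, sub_zero, add_zero]
  exact ⟨R ⧸ Ideal.span {e}, inferInstance, inferInstance,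
    ⟨RingEquiv.ofBijective φ ⟨hinj, hsurj⟩⟩⟩

theorem stmt_10 (R : Type u) [CommRing R]
    (h : (zdGraph R).egirth = 4 ∨ (zdGraph R).egirth = ⊤) :
    totDomNum R = domNum R ∨
      ∃ (D : Type u) (_ : CommRing D) (_ : IsDomain D), Nonempty (R ≃+* ZMod 2 × D) := by
  classical
  by_cases hV : (zdVerts R).Nonempty
  case neg =>
    left
    have hempty : zdVerts R = ∅ := Set.not_nonempty_iff_eq_empty.mp hV
    have hdomE : IsDomSet R (∅ : Set R) :=
      ⟨Set.empty_subset _, fun v hv _ => by rw [hempty] at hv; exact absurd hv (Set.notMem_empty v)⟩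
    have htotE : IsTotDomSet R (∅ : Set R) :=
      ⟨Set.empty_subset _, fun v hv => by rw [hempty] at hv; exact absurd hv (Set.notMem_empty v)⟩
    have h1 : totDomNum R ≤ 0 := by simpa using zd_totDomNum_le htotE
    have h2 : domNum R ≤ 0 := by simpa using zd_domNum_le hdomE
    rw [le_zero_iff] at h1 h2
    rw [h1, h2]
  case pos =>
  have T : ∀ x y z : R, x ≠ 0 → y ≠ 0 → z ≠ 0 → x ≠ y → x ≠ z → y ≠ z →
      x * y = 0 → x * z = 0 → y * z = 0 → False :=
    fun x y z hx hy hz hxy hxz hyz h1 h2 h3 =>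
      noTriangle h hx hy hz hxy hxz hyz h1 h2 h3
  by_cases hdomv : ∃ x ∈ zdVerts R, ∀ v ∈ zdVerts R, v ≠ x → x * v = 0
  · obtain ⟨x, hxZ, hdomx⟩ := hdomv
    by_cases hx2 : x * x = 0
    · -- a dominating vertex with a loop: γ_t = γ = 1
      left
      have htot : IsTotDomSet R {x} := by
        refine ⟨Set.singleton_subset_iff.mpr hxZ, ?_⟩
        intro v hv
        by_cases hvx : v = x
        · exact ⟨x, rfl, by rw [hvx]; exact hx2⟩
        · exact ⟨x, rfl, hdomx v hv hvx⟩
      have h1 : totDomNum R ≤ 1 := by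
        have := zd_totDomNum_le htot
        rwa [Cardinal.mk_singleton] at this
      have h2 : (1 : Cardinal) ≤ domNum R := by
        apply le_ciInf
        intro X
        obtain ⟨hsub, hdomX⟩ := X.2
        have hXne : X.1.Nonempty := by
          by_cases hxX : x ∈ X.1
          · exact ⟨x, hxX⟩
          · obtain ⟨w, hw, -⟩ := hdomX x hxZ hxX
            exact ⟨w, hw⟩
        rw [Cardinal.one_le_iff_ne_zero, Cardinal.mk_ne_zero_iff]
        exact hXne.to_subtype
      exact le_antisymm (h1.trans h2) zd_domNum_le_totDomNum
    · right
      exact zd_caseA2 T hxZ hdomx hx2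
  · -- no dominating vertex
    push_neg at hdomv
    left
    obtain ⟨a, b, haZ, hbZ, hab, hcov⟩ := zd_coverPair T hV hdomv
    have htot : IsTotDomSet R {a, b} := by
      refine ⟨?_, ?_⟩
      · intro z hz
        rcases hz with rfl | hz
        · exact haZ
        · rw [Set.mem_singleton_iff] at hz; rw [hz]; exact hbZ
      · intro v hv
        rcases hcov v hv with hc | hc
        · exact ⟨a, Set.mem_insert _ _, hc⟩
        · exact ⟨b, Set.mem_insert_of_mem _ rfl, hc⟩
    have h1 : totDomNum R ≤ 2 := by
      refine (zd_totDomNum_le htot).trans ?_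
      have h2 := Cardinal.mk_insert_le (s := ({b} : Set R)) (a := a)
      rw [Cardinal.mk_singleton] at h2
      exact h2.trans (le_of_eq one_add_one_eq_two)
    have h2 : (2 : Cardinal) ≤ domNum R := by
      apply le_ciInf
      intro X
      obtain ⟨hsub, hdomX⟩ := X.2
      have hXne : X.1.Nonempty := by
        by_cases haX : a ∈ X.1
        · exact ⟨a, haX⟩
        · obtain ⟨w, hw, -⟩ := hdomX a haZ haX
          exact ⟨w, hw⟩
      rw [Cardinal.two_le_iff]
      obtain ⟨x, hxX⟩ := hXne
      obtain ⟨v, hvZ, hvx, hxv⟩ := hdomv x (hsub hxX)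
      by_cases hvX : v ∈ X.1
      · exact ⟨⟨x, hxX⟩, ⟨v, hvX⟩, fun hh => hvx (congrArg Subtype.val hh).symm⟩
      · obtain ⟨w, hwX, hwv⟩ := hdomX v hvZ hvX
        have hwx : w ≠ x := fun hh => hxv (by rw [← hh]; exact hwv)
        exact ⟨⟨x, hxX⟩, ⟨w, hwX⟩, fun hh => hwx (congrArg Subtype.val hh).symm⟩
    exact le_antisymm (h1.trans h2) zd_domNum_le_totDomNum
end

section
/- Let R be a commutative ring whose zero-divisor graph Γ(R) has girth 4. Then γ_t(Γ(R)) = γ(Γ(R)) = 2. -/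
section Aux

open SimpleGraph

variable {R : Type*} [CommRing R]

/-- Girth 4 implies there is no triangle. -/
lemma zd_no_triangle (h : (zdGraph R).egirth = 4)
    (x y z : R) (hxy : x ≠ y) (hyz : y ≠ z) (hxz : x ≠ z)
    (hx : x ≠ 0) (hy : y ≠ 0) (hz : z ≠ 0)
    (pxy : x * y = 0) (pyz : y * z = 0) (pxz : x * z = 0) : False := by
  have axy : (zdGraph R).Adj x y := ⟨hxy, hx, hy, pxy⟩
  have ayz : (zdGraph R).Adj y z := ⟨hyz, hy, hz, pyz⟩
  have azx : (zdGraph R).Adj z x :=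
    ⟨hxz.symm, hz, hx, by rw [mul_comm]; exact pxz⟩
  let w : (zdGraph R).Walk x x :=
    Walk.cons axy (Walk.cons ayz (Walk.cons azx Walk.nil))
  have hc : w.IsCycle := by
    rw [Walk.isCycle_def]
    refine ⟨⟨?_⟩, ?_, ?_⟩
    · simp only [w, Walk.edges_cons, Walk.edges_nil, List.nodup_cons, List.mem_cons,
        List.not_mem_nil, or_false, List.mem_singleton, List.nodup_nil, and_true, not_or,
        Sym2.eq_iff]
      tauto
    · simp [w]
    · simp only [w, Walk.support_cons, Walk.support_nil, List.tail_cons, List.nodup_cons,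
        List.mem_cons, List.not_mem_nil, or_false, List.mem_singleton, List.nodup_nil, and_true,
        not_or]
      tauto
  have h4 : (4 : ℕ∞) ≤ (w.length : ℕ∞) := by
    rw [← h]
    exact le_egirth.1 le_rfl x w hc
  have h3 : w.length = 3 := by simp [w]
  rw [h3] at h4
  norm_num at h4

/-- Girth 4 implies there are two disjoint edges. -/
lemma zd_two_edges (h : (zdGraph R).egirth = 4) :
    ∃ a b c d : R, a * b = 0 ∧ c * d = 0 ∧ a ≠ 0 ∧ b ≠ 0 ∧ c ≠ 0 ∧ d ≠ 0 ∧
      a ≠ b ∧ a ≠ c ∧ a ≠ d ∧ b ≠ c ∧ b ≠ d ∧ c ≠ d := by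
  have hnac : ¬ (zdGraph R).IsAcyclic := by
    rw [← egirth_eq_top, h]
    simp
  obtain ⟨a, w, hc, hlen⟩ := (exists_egirth_eq_length).2 hnac
  rw [h] at hlen
  have hl : w.length = 4 := by exact_mod_cast hlen.symm
  cases w with
  | nil => simp at hl
  | cons hab p =>
    rename_i b
    cases p with
    | nil => simp at hl
    | cons hbc p =>
      rename_i c
      cases p with
      | nil => simp at hl
      | cons hcd p =>
        rename_i d
        cases p with
        | nil => simp at hl
        | cons hde p =>
          rename_i e
          cases p with
          | cons h' p' =>
            exfalso
            simp only [Walk.length_cons] at hl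
            omega
          | nil =>
            have hnd := hc.2
            simp only [Walk.support_cons, Walk.support_nil, List.tail_cons,
              List.nodup_cons, List.mem_cons, List.not_mem_nil, or_false,
              List.mem_singleton, List.nodup_nil, and_true, not_or] at hnd
            refine ⟨a, b, c, d, hab.2.2.2, hcd.2.2.2, hab.2.1, hab.2.2.1, hbc.2.2.1,
              hcd.2.2.1, hab.1, fun h1 => ?_, fun h1 => ?_, fun h1 => ?_, fun h1 => ?_,
              fun h1 => ?_⟩ <;>
              first
              | exact (by tauto : ¬ c = a) h1.symm
              | exact (by tauto : ¬ d = a) h1.symm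
              | exact (by tauto : ¬ b = c) h1
              | exact (by tauto : ¬ b = d) h1
              | exact (by tauto : ¬ c = d) h1

variable (h : (zdGraph R).egirth = 4)
include h

/-- There exists a two-element total dominating "pair". -/
lemma zd_pair :
    ∃ p q : R, p ≠ q ∧ p ∈ zdVerts R ∧ q ∈ zdVerts R ∧
      ∀ v ∈ zdVerts R, p * v = 0 ∨ q * v = 0 := by
  have tf : ∀ x y z : R, x ≠ y → y ≠ z → x ≠ z → x ≠ 0 → y ≠ 0 → z ≠ 0 →
      x * y = 0 → y * z = 0 → x * z = 0 → False := fun x y z => zd_no_triangle h x y z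
  obtain ⟨a, b, c, d, hab, hcd, ha, hb, hc, hd, hab', hac', had', hbc', hbd', hcd'⟩ :=
    zd_two_edges h
  by_cases hred : ∀ m : R, m * m = 0 → m = 0
  · -- reduced case: the pair is (a, b)
    refine ⟨a, b, hab', ⟨ha, b, hb, hab⟩, ⟨hb, a, ha, by rw [mul_comm]; exact hab⟩, ?_⟩
    rintro v ⟨hv, w, hw, hvw⟩
    by_contra hcon
    push_neg at hcon
    obtain ⟨hav, hbv⟩ := hcon
    have hva : v * a ≠ 0 := by rw [mul_comm]; exact hav
    have hvb : v * b ≠ 0 := by rw [mul_comm]; exact hbv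
    -- triangle (v*a, w, v*b)
    have h1 : v * a ≠ w := fun hEq =>
      hva (hred _ (by linear_combination (v * a) * hEq + a * hvw))
    have h3 : w ≠ v * b := fun hEq =>
      hvb (hred _ (by linear_combination b * hvw - (v * b) * hEq))
    have h5 : v * a ≠ v * b := fun hEq =>
      hva (hred _ (by linear_combination (v * a) * hEq + v * v * hab))
    exact tf (v * a) w (v * b) h1 h3 h5 hva hw hvb
      (by linear_combination a * hvw)
      (by linear_combination b * hvw)
      (by linear_combination v * v * hab)
  · -- non-reduced case
    push_neg at hred
    obtain ⟨n, hnsq, hn⟩ := hred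
    -- L1a: two distinct nonzero square-zero elements multiply to zero
    have L1a : ∀ m m' : R, m * m = 0 → m' * m' = 0 → m ≠ 0 → m' ≠ 0 → m ≠ m' →
        m * m' = 0 := by
      intro m m' hm hm' hm0 hm'0 hmm'
      by_contra hp
      have key1 : m * m' ≠ m := fun hEq =>
        hp (by linear_combination m * hm' - m' * hEq)
      have key2 : m * m' + m ≠ 0 := fun hEq =>
        hp (by linear_combination m' * hEq - m * hm')
      exact tf (m * m') m (m * m' + m)
        key1
        (fun hEq => hp (by linear_combination -hEq))
        (fun hEq => hm0 (by linear_combination -hEq))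
        hp hm0 key2
        (by linear_combination m' * hm)
        (by linear_combination (m' + 1) * hm)
        (by linear_combination (m' * m' + m') * hm)
    -- L1b: and then they are negatives of each other
    have L1b : ∀ m m' : R, m * m = 0 → m' * m' = 0 → m ≠ 0 → m' ≠ 0 → m ≠ m' →
        m' = -m := by
      intro m m' hm hm' hm0 hm'0 hmm'
      have hmul := L1a m m' hm hm' hm0 hm'0 hmm'
      by_contra hne
      have hsum : m + m' ≠ 0 := fun hEq => hne (by linear_combination hEq)
      exact tf m m' (m + m')
        hmm'
        (fun hEq => hm0 (by linear_combination -hEq))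
        (fun hEq => hm'0 (by linear_combination -hEq))
        hm0 hm'0 hsum
        hmul
        (by linear_combination hmul + hm')
        (by linear_combination hm + hmul)
    -- L2: n is the unique nonzero square-zero element
    have L2 : ∀ m : R, m * m = 0 → m = 0 ∨ m = n := by
      intro m hm
      by_contra hcon
      push_neg at hcon
      obtain ⟨hm0, hmn⟩ := hcon
      have hmneg : m = -n := L1b n m hnsq hm hn hm0 (Ne.symm hmn)
      have h2n : (2 : R) * n ≠ 0 := by
        intro hEq
        apply hmn
        rw [hmneg]
        linear_combination -hEq
      have h2nsq : (2 * n) * (2 * n) = (0 : R) := by linear_combination 4 * hnsq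
      have h2nn : n ≠ 2 * n := fun hEq => hn (by linear_combination -hEq)
      have h3n : 2 * n = -n := L1b n (2 * n) hnsq h2nsq hn h2n h2nn
      have h3n0 : (3 : R) * n = 0 := by linear_combination h3n
      -- classification of square-zero elements
      have sqcl : ∀ k : R, k * k = 0 → k = 0 ∨ k = n ∨ k = 2 * n := by
        intro k hk
        by_cases hk0 : k = 0
        · exact Or.inl hk0
        by_cases hkn : k = n
        · exact Or.inr (Or.inl hkn)
        have hneg := L1b n k hnsq hk hn hk0 (Ne.symm hkn)
        right; right
        rw [hneg, ← h3n]
      -- helper: if 2 * (y*n) = 0 then y * n = 0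
      have halfkill : ∀ y : R, (2 : R) * (y * n) = 0 → y * n = 0 := by
        intro y h2
        have hynsq : (y * n) * (y * n) = 0 := by linear_combination y * y * hnsq
        rcases sqcl (y * n) hynsq with h0 | h1 | h1
        · exact h0
        · exact absurd (by linear_combination h2 - 2 * h1 : (2 : R) * n = 0) h2n
        · exfalso
          apply hn
          have h4 : (4 : R) * n = 0 := by linear_combination h2 - 2 * h1
          linear_combination h4 - h3n0
      -- each edge has an endpoint annihilating n
      have edgeAnn : ∀ x y : R, x ≠ 0 → y ≠ 0 → x * y = 0 → x * n = 0 ∨ y * n = 0 := by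
        intro x y hx0 hy0 hxy0
        by_contra hcon2
        push_neg at hcon2
        obtain ⟨hxn, hyn⟩ := hcon2
        have hxnsq : (x * n) * (x * n) = 0 := by linear_combination x * x * hnsq
        rcases sqcl (x * n) hxnsq with h0 | h1 | h1
        · exact hxn h0
        · exact hyn (by linear_combination n * hxy0 - y * h1)
        · exact hyn (halfkill y (by linear_combination n * hxy0 - y * h1))
      -- find e annihilating n, with e ∉ {0, n, 2n}, from an edge
      have findE : ∀ x y : R, x ≠ 0 → y ≠ 0 → x ≠ y → x * y = 0 →
          (∃ e : R, e ≠ 0 ∧ e * n = 0 ∧ e ≠ n ∧ e ≠ 2 * n) ∨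
          ((x = n ∨ x = 2 * n) ∧ (y = n ∨ y = 2 * n)) := by
        intro x y hx0 hy0 hxy hxy0
        have hsymm : y * x = 0 := by rw [mul_comm]; exact hxy0
        have step : ∀ u u' : R, u ≠ 0 → u' ≠ 0 → u ≠ u' → u * u' = 0 → u * n = 0 →
            (∃ e : R, e ≠ 0 ∧ e * n = 0 ∧ e ≠ n ∧ e ≠ 2 * n) ∨
            ((u = n ∨ u = 2 * n) ∧ (u' = n ∨ u' = 2 * n)) := by
          intro u u' hu0 hu'0 huu' huu'0 hun
          by_cases hu1 : u = n
          · have hu'n : u' * n = 0 := by linear_combination huu'0 - u' * hu1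
            by_cases hy1 : u' = n
            · exact absurd (hu1.trans hy1.symm) huu'
            by_cases hy2 : u' = 2 * n
            · exact Or.inr ⟨Or.inl hu1, Or.inr hy2⟩
            · exact Or.inl ⟨u', hu'0, hu'n, hy1, hy2⟩
          by_cases hu2 : u = 2 * n
          · have hu'n : u' * n = 0 :=
              halfkill u' (by linear_combination huu'0 - u' * hu2)
            by_cases hy1 : u' = n
            · exact Or.inr ⟨Or.inr hu2, Or.inl hy1⟩
            by_cases hy2 : u' = 2 * n
            · exact absurd (hu2.trans hy2.symm) huu'
            · exact Or.inl ⟨u', hu'0, hu'n, hy1, hy2⟩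
          · exact Or.inl ⟨u, hu0, hun, hu1, hu2⟩
        rcases edgeAnn x y hx0 hy0 hxy0 with hxn | hyn
        · exact step x y hx0 hy0 hxy hxy0 hxn
        · rcases step y x hy0 hx0 (Ne.symm hxy) hsymm hyn with hE | ⟨h1, h2⟩
          · exact Or.inl hE
          · exact Or.inr ⟨h2, h1⟩
      have hE : ∃ e : R, e ≠ 0 ∧ e * n = 0 ∧ e ≠ n ∧ e ≠ 2 * n := by
        rcases findE a b ha hb hab' hab with hE | ⟨hA, hB⟩
        · exact hE
        rcases findE c d hc hd hcd' hcd with hE | ⟨hC, hD⟩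
        · exact hE
        exfalso
        rcases hA with hA | hA <;> rcases hB with hB | hB <;>
          rcases hC with hC | hC <;> rcases hD with hD | hD <;>
          first
          | exact hab' (hA.trans hB.symm)
          | exact hcd' (hC.trans hD.symm)
          | exact hac' (hA.trans hC.symm)
          | exact had' (hA.trans hD.symm)
          | exact hbc' (hB.trans hC.symm)
          | exact hbd' (hB.trans hD.symm)
      obtain ⟨e, he0, hen, hen1, hen2⟩ := hE
      -- triangle (n, 2n, e)
      exact tf n (2 * n) e
        (fun hEq => hn (by linear_combination -hEq))
        (Ne.symm hen2) (Ne.symm hen1)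
        hn h2n he0
        (by linear_combination 2 * hnsq)
        (by linear_combination 2 * hen)
        (by linear_combination hen)
    -- L3: there exists a vertex not annihilating n
    have L3 : ∃ v0 w0 : R, v0 ≠ 0 ∧ w0 ≠ 0 ∧ v0 * w0 = 0 ∧ v0 * n ≠ 0 := by
      by_contra hcon
      push_neg at hcon
      have han : a * n = 0 := hcon a b ha hb hab
      have hbn : b * n = 0 := hcon b a hb ha (by rw [mul_comm]; exact hab)
      have hcn : c * n = 0 := hcon c d hc hd hcd
      have hdn : d * n = 0 := hcon d c hd hc (by rw [mul_comm]; exact hcd)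
      have hnab : n = a ∨ n = b := by
        by_contra hco
        push_neg at hco
        exact tf a b n hab' (Ne.symm hco.2) (Ne.symm hco.1) ha hb hn hab hbn han
      have hncd : n = c ∨ n = d := by
        by_contra hco
        push_neg at hco
        exact tf c d n hcd' (Ne.symm hco.2) (Ne.symm hco.1) hc hd hn hcd hdn hcn
      rcases hnab with rfl | rfl <;> rcases hncd with h1 | h1
      · exact hac' h1
      · exact had' h1
      · exact hbc' h1
      · exact hbd' h1
    obtain ⟨v0, w0, hv0, hw0, hv0w0, hv0n⟩ := L3
    have hv0nsq : (v0 * n) * (v0 * n) = 0 := by linear_combination v0 * v0 * hnsq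
    have hv0neq : v0 * n = n := (L2 _ hv0nsq).resolve_left hv0n
    have hw0n : w0 * n = 0 := by linear_combination n * hv0w0 - w0 * hv0neq
    -- the pair is (n, w0)
    have hnw0 : n ≠ w0 := by
      intro hEq
      apply hv0n
      rw [hEq]
      exact hv0w0
    refine ⟨n, w0, hnw0, ⟨hn, n, hn, hnsq⟩,
      ⟨hw0, v0, hv0, by rw [mul_comm]; exact hv0w0⟩, ?_⟩
    rintro v ⟨hv, w, hw, hvw⟩
    by_contra hcon
    push_neg at hcon
    obtain ⟨hnv, hw0v⟩ := hcon
    have hvn : v * n ≠ 0 := by rw [mul_comm]; exact hnv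
    have hvw0 : v * w0 ≠ 0 := by rw [mul_comm]; exact hw0v
    have hvnsq : (v * n) * (v * n) = 0 := by linear_combination v * v * hnsq
    have hvneq : v * n = n := (L2 _ hvnsq).resolve_left hvn
    by_cases hq : v * w0 = n
    · -- then v0 * n = 0, contradicting v0 * n = n ≠ 0
      exact hv0n (by linear_combination v * hv0w0 - v0 * hq)
    · -- triangle (w, n, v*w0)
      have hwn : w ≠ n := by
        intro hEq
        apply hvn
        rw [← hEq]
        exact hvw
      have hwvw0 : w ≠ v * w0 := by
        intro hEq
        have h2 : (v * w0) * (v * w0) = 0 := by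
          linear_combination w0 * hvw - (v * w0) * hEq
        rcases L2 _ h2 with h0 | h0
        · exact hvw0 h0
        · exact hq h0
      exact tf w n (v * w0) hwn (Ne.symm hq) hwvw0 hw hn hvw0
        (by linear_combination n * hvw - w * hvneq)
        (by linear_combination w0 * hvneq + hw0n)
        (by linear_combination w0 * hvw)

/-- Any dominating set has two distinct elements. -/
lemma zd_dom_two (X : Set R) (hX : IsDomSet R X) :
    ∃ x ∈ X, ∃ y ∈ X, x ≠ y := by
  have tf : ∀ x y z : R, x ≠ y → y ≠ z → x ≠ z → x ≠ 0 → y ≠ 0 → z ≠ 0 →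
      x * y = 0 → y * z = 0 → x * z = 0 → False := fun x y z => zd_no_triangle h x y z
  obtain ⟨a, b, c, d, hab, hcd, ha, hb, hc, hd, hab', hac', had', hbc', hbd', hcd'⟩ :=
    zd_two_edges h
  have haV : a ∈ zdVerts R := ⟨ha, b, hb, hab⟩
  have hbV : b ∈ zdVerts R := ⟨hb, a, ha, by rw [mul_comm]; exact hab⟩
  have hcV : c ∈ zdVerts R := ⟨hc, d, hd, hcd⟩
  have hdV : d ∈ zdVerts R := ⟨hd, c, hc, by rw [mul_comm]; exact hcd⟩
  obtain ⟨x, hxX⟩ : ∃ x, x ∈ X := by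
    by_cases hmem : a ∈ X
    · exact ⟨a, hmem⟩
    · obtain ⟨x, hx, _⟩ := hX.2 a haV hmem
      exact ⟨x, hx⟩
  refine ⟨x, hxX, ?_⟩
  by_contra hcon
  push_neg at hcon
  have hsub : ∀ y ∈ X, y = x := fun y hy => (hcon y hy).symm
  have hx0 : x ≠ 0 := (hX.1 hxX).1
  have hkill : ∀ v ∈ zdVerts R, v ≠ x → x * v = 0 := by
    intro v hv hvx
    have hvX : v ∉ X := fun hmem => hvx (hsub v hmem)
    obtain ⟨z, hzX, hz⟩ := hX.2 v hv hvX
    rw [hsub z hzX] at hz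
    exact hz
  by_cases hxab : x = a ∨ x = b
  · have hxc : x ≠ c := by rcases hxab with rfl | rfl; exacts [hac', hbc']
    have hxd : x ≠ d := by rcases hxab with rfl | rfl; exacts [had', hbd']
    exact tf x c d hxc hcd' hxd hx0 hc hd
      (hkill c hcV (Ne.symm hxc)) hcd (hkill d hdV (Ne.symm hxd))
  · push_neg at hxab
    exact tf x a b hxab.1 hab' hxab.2 hx0 ha hb
      (hkill a haV (Ne.symm hxab.1)) hab (hkill b hbV (Ne.symm hxab.2))

end Aux

theorem stmt_11 (R : Type*) [CommRing R] (h : (zdGraph R).egirth = 4) :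
    totDomNum R = 2 ∧ domNum R = 2 := by
  classical
  obtain ⟨p, q, hpq, hpV, hqV, hcov⟩ := zd_pair h
  set X0 : Set R := {p, q} with hX0
  have htot : IsTotDomSet R X0 := by
    constructor
    · intro x hx
      rcases hx with rfl | rfl
      · exact hpV
      · exact hqV
    · intro v hv
      rcases hcov v hv with h1 | h1
      · exact ⟨p, Or.inl rfl, h1⟩
      · exact ⟨q, Or.inr rfl, h1⟩
  have hdom : IsDomSet R X0 := ⟨htot.1, fun v hv _ => htot.2 v hv⟩
  have hmk : Cardinal.mk X0 = 2 := by
    rw [hX0]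
    rw [show ({p, q} : Set R) = insert p {q} from rfl]
    rw [Cardinal.mk_insert (by simpa using hpq)]
    rw [Cardinal.mk_singleton]
    exact one_add_one_eq_two
  haveI hne1 : Nonempty {X : Set R // IsTotDomSet R X} := ⟨⟨X0, htot⟩⟩
  haveI hne2 : Nonempty {X : Set R // IsDomSet R X} := ⟨⟨X0, hdom⟩⟩
  have hlow : ∀ (X : Set R), IsDomSet R X → (2 : Cardinal) ≤ Cardinal.mk X := by
    intro X hX
    obtain ⟨x, hx, y, hy, hxy⟩ := zd_dom_two h X hX
    rw [Cardinal.two_le_iff]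
    exact ⟨⟨x, hx⟩, ⟨y, hy⟩, fun hEq => hxy (congrArg Subtype.val hEq)⟩
  constructor
  · apply le_antisymm
    · calc totDomNum R ≤ Cardinal.mk X0 :=
          ciInf_le (OrderBot.bddBelow _) (⟨X0, htot⟩ : {X : Set R // IsTotDomSet R X})
        _ = 2 := hmk
    · exact le_ciInf fun X => hlow X.1 ⟨X.2.1, fun v hv _ => X.2.2 v hv⟩
  · apply le_antisymm
    · calc domNum R ≤ Cardinal.mk X0 :=
          ciInf_le (OrderBot.bddBelow _) (⟨X0, hdom⟩ : {X : Set R // IsDomSet R X})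
        _ = 2 := hmk
    · exact le_ciInf fun X => hlow X.1 X.2
end

section
/- Let R be a commutative ring with a unique nonzero nilpotent element x satisfying x² = 0, such that ann(x) = Z(R). Then γ_t(Γ(R)) = γ(Γ(R)) = 1. -/
theorem stmt_14 (R : Type*) [CommRing R] (x : R) (hx : x ≠ 0) (hx2 : x ^ 2 = 0)
    (huniq : ∀ y : R, y ≠ 0 → IsNilpotent y → y = x)
    (hann : {r : R | r * x = 0} = zdSet R) :
    totDomNum R = 1 ∧ domNum R = 1 := by
  have hxx : x * x = 0 := by rw [← pow_two]; exact hx2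
  have hxv : x ∈ zdVerts R := ⟨hx, x, hx, hxx⟩
  have hkill : ∀ v ∈ zdVerts R, x * v = 0 := by
    intro v hv
    have : v ∈ zdSet R := hv.2
    rw [← hann] at this
    rw [mul_comm]; exact this
  have htot : IsTotDomSet R {x} := by
    constructor
    · intro a ha; rw [Set.mem_singleton_iff] at ha; subst ha; exact hxv
    · intro v hv; exact ⟨x, rfl, hkill v hv⟩
  have hdom : IsDomSet R {x} := ⟨htot.1, fun v hv _ => htot.2 v hv⟩
  have hmk : Cardinal.mk ({x} : Set R) = 1 := Cardinal.mk_singleton x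
  constructor
  · apply le_antisymm
    · calc totDomNum R ≤ Cardinal.mk (({x} : Set R)) :=
            ciInf_le (OrderBot.bddBelow _) (⟨{x}, htot⟩ : {X : Set R // IsTotDomSet R X})
        _ = 1 := hmk
    · haveI : Nonempty {X : Set R // IsTotDomSet R X} := ⟨⟨{x}, htot⟩⟩
      haveI : Nonempty {X : Set R // IsDomSet R X} := ⟨⟨{x}, hdom⟩⟩
      apply le_ciInf
      rintro ⟨X, hX⟩
      have : X.Nonempty := by
        obtain ⟨a, ha, -⟩ := hX.2 x hxv
        exact ⟨a, ha⟩
      simpa [Cardinal.one_le_iff_ne_zero, Cardinal.mk_ne_zero_iff, Set.Nonempty] using this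
  · apply le_antisymm
    · calc domNum R ≤ Cardinal.mk (({x} : Set R)) :=
            ciInf_le (OrderBot.bddBelow _) (⟨{x}, hdom⟩ : {X : Set R // IsDomSet R X})
        _ = 1 := hmk
    · haveI : Nonempty {X : Set R // IsTotDomSet R X} := ⟨⟨{x}, htot⟩⟩
      haveI : Nonempty {X : Set R // IsDomSet R X} := ⟨⟨{x}, hdom⟩⟩
      apply le_ciInf
      rintro ⟨X, hX⟩
      have : X.Nonempty := by
        by_cases hxX : x ∈ X
        · exact ⟨x, hxX⟩
        · obtain ⟨a, ha, -⟩ := hX.2 x hxv hxX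
          exact ⟨a, ha⟩
      simpa [Cardinal.one_le_iff_ne_zero, Cardinal.mk_ne_zero_iff, Set.Nonempty] using this
end

section
/- Let R be a commutative ring. If γ_t(Γ(R)) = 3, then γ(Γ(R)) = 3. -/
/-- Key lemma: if a pair `{a,b}` of vertices dominates Γ(R), then there is a
total dominating set with at most two elements. -/
lemma totDom_of_pair_dom {R : Type*} [CommRing R] {a b : R}
    (ha : a ∈ zdVerts R) (hb : b ∈ zdVerts R)
    (hdom : ∀ v ∈ zdVerts R, v ≠ a → v ≠ b → a * v = 0 ∨ b * v = 0) :
    ∃ x y : R, IsTotDomSet R {x, y} := by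
  by_cases h1 : ∃ t, t ≠ 0 ∧ b * t = 0 ∧ a * t ≠ 0
  · obtain ⟨t, ht0, hbt, hat⟩ := h1
    by_cases h2 : ∃ s, s ≠ 0 ∧ a * s = 0 ∧ b * s ≠ 0
    · obtain ⟨s, hs0, has, hbs⟩ := h2
      refine ⟨b * s, a * t, ?_, ?_⟩
      · intro x hx
        rcases hx with rfl | hx
        · exact ⟨hbs, a, ha.1, by linear_combination b * has⟩
        · rw [Set.mem_singleton_iff] at hx
          subst hx
          exact ⟨hat, b, hb.1, by linear_combination a * hbt⟩
      · intro v hv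
        by_cases hva : v = a
        · subst hva
          exact ⟨b * s, Set.mem_insert _ _, by linear_combination b * has⟩
        by_cases hvb : v = b
        · subst hvb
          exact ⟨a * t, Set.mem_insert_of_mem _ rfl, by linear_combination a * hbt⟩
        rcases hdom v hv hva hvb with hav | hbv
        · exact ⟨a * t, Set.mem_insert_of_mem _ rfl, by linear_combination t * hav⟩
        · exact ⟨b * s, Set.mem_insert _ _, by linear_combination s * hbv⟩
    · push_neg at h2
      obtain ⟨s₀, hs₀0, has₀⟩ := ha.2
      have hbs₀ : b * s₀ = 0 := h2 s₀ hs₀0 has₀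
      refine ⟨s₀, b, ?_, ?_⟩
      · intro x hx
        rcases hx with rfl | hx
        · exact ⟨hs₀0, a, ha.1, by linear_combination has₀⟩
        · rw [Set.mem_singleton_iff] at hx; subst hx; exact hb
      · intro v hv
        by_cases hva : v = a
        · subst hva
          exact ⟨s₀, Set.mem_insert _ _, by linear_combination has₀⟩
        by_cases hvb : v = b
        · subst hvb
          exact ⟨s₀, Set.mem_insert _ _, by linear_combination hbs₀⟩
        rcases hdom v hv hva hvb with hav | hbv
        · have : b * v = 0 := h2 v hv.1 hav
          exact ⟨b, Set.mem_insert_of_mem _ rfl, this⟩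
        · exact ⟨b, Set.mem_insert_of_mem _ rfl, hbv⟩
  · push_neg at h1
    obtain ⟨t₀, ht₀0, hbt₀⟩ := hb.2
    have hat₀ : a * t₀ = 0 := h1 t₀ ht₀0 hbt₀
    refine ⟨t₀, a, ?_, ?_⟩
    · intro x hx
      rcases hx with rfl | hx
      · exact ⟨ht₀0, b, hb.1, by linear_combination hbt₀⟩
      · rw [Set.mem_singleton_iff] at hx; subst hx; exact ha
    · intro v hv
      by_cases hva : v = a
      · subst hva
        exact ⟨t₀, Set.mem_insert _ _, by linear_combination hat₀⟩
      by_cases hvb : v = b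
      · subst hvb
        exact ⟨t₀, Set.mem_insert _ _, by linear_combination hbt₀⟩
      rcases hdom v hv hva hvb with hav | hbv
      · exact ⟨a, Set.mem_insert_of_mem _ rfl, hav⟩
      · have : a * v = 0 := h1 v hv.1 hbv
        exact ⟨a, Set.mem_insert_of_mem _ rfl, this⟩

theorem stmt_15 (R : Type*) [CommRing R] (h : totDomNum R = 3) :
    domNum R = 3 := by
  have hTle : ∀ X : Set R, IsTotDomSet R X → totDomNum R ≤ Cardinal.mk X :=
    fun X hX => ciInf_le' _ (⟨X, hX⟩ : {X : Set R // IsTotDomSet R X})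
  have hDle : ∀ X : Set R, IsDomSet R X → domNum R ≤ Cardinal.mk X :=
    fun X hX => ciInf_le' _ (⟨X, hX⟩ : {X : Set R // IsDomSet R X})
  have tot_imp_dom : ∀ X : Set R, IsTotDomSet R X → IsDomSet R X :=
    fun X hX => ⟨hX.1, fun v hv _ => hX.2 v hv⟩
  have h23 : ¬ ((3 : Cardinal) ≤ 2) := by
    rw [show (3 : Cardinal) = ((3 : ℕ) : Cardinal) by norm_num,
      show (2 : Cardinal) = ((2 : ℕ) : Cardinal) by norm_num, Nat.cast_le]
    norm_num
  -- no total dominating set of size ≤ 2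
  have small : ∀ x y : R, IsTotDomSet R {x, y} → False := by
    intro x y hxy
    have h1 := hTle _ hxy
    rw [h] at h1
    have h2 : Cardinal.mk ({x, y} : Set R) ≤ 2 := by
      refine le_trans (Cardinal.mk_insert_le) ?_
      rw [Cardinal.mk_singleton]
      norm_num
    exact h23 (h1.trans h2)
  have hTne : Nonempty {X : Set R // IsTotDomSet R X} := by
    by_contra hne
    rw [not_nonempty_iff] at hne
    haveI := hne
    rw [totDomNum, iInf, Set.range_eq_empty, Cardinal.sInf_empty] at h
    exact absurd h.symm (by simp)
  have hDne : Nonempty {X : Set R // IsDomSet R X} :=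
    ⟨⟨hTne.some.1, tot_imp_dom _ hTne.some.2⟩⟩
  have hub : domNum R ≤ 3 := by
    rw [← h, totDomNum]
    exact le_ciInf fun T => hDle T.1 (tot_imp_dom T.1 T.2)
  have hlb : (3 : Cardinal) ≤ domNum R := by
    rw [domNum]
    refine le_ciInf fun D => ?_
    obtain ⟨D, hD⟩ := D
    by_contra h3
    by_cases hDem : D.Nonempty
    · obtain ⟨a₀, ha₀⟩ := hDem
      by_cases hb : ∃ b₀ ∈ D, b₀ ≠ a₀
      · obtain ⟨b₀, hb₀, hba⟩ := hb
        by_cases hc : ∃ c ∈ D, c ≠ a₀ ∧ c ≠ b₀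
        · obtain ⟨c, hc, hca, hcb⟩ := hc
          apply h3
          have hsub : ({a₀, b₀, c} : Set R) ⊆ D := by
            intro x hx
            rcases hx with rfl | rfl | rfl
            · exact ha₀
            · exact hb₀
            · exact hc
          have hmk : Cardinal.mk ({a₀, b₀, c} : Set R) = 3 := by
            rw [Cardinal.mk_insert (by simp [hba.symm, hca.symm]),
              Cardinal.mk_insert (by simp [hcb.symm]), Cardinal.mk_singleton]
            norm_num
          calc (3 : Cardinal) = Cardinal.mk ({a₀, b₀, c} : Set R) := hmk.symm
            _ ≤ Cardinal.mk D := Cardinal.mk_le_mk_of_subset hsub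
        · push_neg at hc
          have hdom : ∀ v ∈ zdVerts R, v ≠ a₀ → v ≠ b₀ → a₀ * v = 0 ∨ b₀ * v = 0 := by
            intro v hv hva hvb
            have hvD : v ∉ D := fun hvD => by
              rcases (em (v = a₀)) with h' | h'
              · exact hva h'
              · exact hvb (hc v hvD h')
            obtain ⟨x, hxD, hx⟩ := hD.2 v hv hvD
            rcases (em (x = a₀)) with h' | h'
            · subst h'; exact Or.inl hx
            · have := hc x hxD h'; subst this; exact Or.inr hx
          obtain ⟨x, y, hxy⟩ := totDom_of_pair_dom (hD.1 ha₀) (hD.1 hb₀) hdom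
          exact small x y hxy
      · push_neg at hb
        have hdom : ∀ v ∈ zdVerts R, v ≠ a₀ → v ≠ a₀ → a₀ * v = 0 ∨ a₀ * v = 0 := by
          intro v hv hva _
          have hvD : v ∉ D := fun hvD => hva (hb v hvD)
          obtain ⟨x, hxD, hx⟩ := hD.2 v hv hvD
          have := hb x hxD; subst this
          exact Or.inl hx
        obtain ⟨x, y, hxy⟩ := totDom_of_pair_dom (hD.1 ha₀) (hD.1 ha₀) hdom
        exact small x y hxy
    · rw [Set.not_nonempty_iff_eq_empty] at hDem
      subst hDem
      have hemp : IsTotDomSet R (∅ : Set R) := by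
        refine ⟨Set.empty_subset _, fun v hv => ?_⟩
        obtain ⟨x, hx, _⟩ := hD.2 v hv (Set.notMem_empty v)
        exact absurd hx (Set.notMem_empty x)
      have h1 := hTle _ hemp
      rw [h, Cardinal.mk_emptyCollection] at h1
      exact absurd h1 (by simp)
  exact le_antisymm hub hlb
end

section
/- Let R be a commutative ring with 4 ≤ γ_t(Γ(R)) < ∞. Then γ(Γ(R)) = γ_t(Γ(R)). -/
/-! ### Auxiliary lemmas -/

private lemma aux_mk_eq_ncard {α : Type*} {s : Set α} (hs : s.Finite) :
    Cardinal.mk s = (s.ncard : Cardinal) := by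
  haveI := hs.fintype
  rw [Cardinal.mk_fintype, ← Nat.card_coe_set_eq, Nat.card_eq_fintype_card]

private lemma aux_tot_isDom {R : Type*} [CommRing R] {X : Set R} (h : IsTotDomSet R X) :
    IsDomSet R X :=
  ⟨h.1, fun v hv _ => h.2 v hv⟩

private lemma aux_totDomNum_le_mk {R : Type*} [CommRing R] {X : Set R} (h : IsTotDomSet R X) :
    totDomNum R ≤ Cardinal.mk X :=
  ciInf_le (OrderBot.bddBelow _) (⟨X, h⟩ : {X : Set R // IsTotDomSet R X})

/-- The stuck case: `a` is a bad element of the dominating set `D`, the annihilator of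
`a^2` equals that of `a`, and `a` has a private neighbor `p`.  Then `a` is idempotent
and a direct construction produces a total dominating set no larger than `D`. -/
private lemma aux_stuck {R : Type*} [CommRing R] (h4 : 4 ≤ totDomNum R)
    {D : Set R} (hDfin : D.Finite) (hD : IsDomSet R D) {a : R} (haD : a ∈ D)
    (hbad : ∀ y ∈ D, y * a ≠ 0)
    (hfix1 : ∀ c, c * a ^ 2 = 0 → c * a = 0)
    {p : R} (hpD : p ∉ D) (hpa : p * a = 0) (hp0 : p ≠ 0)
    (hpriv : ∀ x ∈ D, x ≠ a → x * p ≠ 0) :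
    totDomNum R ≤ (D.ncard : Cardinal) := by
  classical
  obtain ⟨ha0, y₀, hy₀0, hay₀⟩ := hD.1 haD
  -- annihilator stability for all powers
  have hstab : ∀ n : ℕ, ∀ c : R, c * a ^ (n + 1) = 0 → c * a = 0 := by
    intro n
    induction n with
    | zero => intro c h; simpa using h
    | succ n ih =>
      intro c h
      have h2 : (c * a ^ n) * a ^ 2 = 0 := by
        rw [show (c * a ^ n) * a ^ 2 = c * a ^ (n + 1 + 1) by ring]; exact h
      have h3 := hfix1 _ h2
      exact ih c (by rw [show c * a ^ (n + 1) = c * a ^ n * a by ring]; exact h3)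
  have hpow0 : ∀ n : ℕ, a ^ (n + 1) ≠ 0 := by
    intro n h
    exact ha0 (by simpa using hstab n 1 (by simpa using h))
  have hpowD : ∀ n : ℕ, a ^ (n + 1) ∈ D := by
    intro n
    by_contra hn
    obtain ⟨x, hxD, hx⟩ := hD.2 _ ⟨hpow0 n, y₀, hy₀0, by
      rw [show a ^ (n + 1) * y₀ = a ^ n * (a * y₀) by ring, hay₀, mul_zero]⟩ hn
    exact hbad x hxD (hstab n x hx)
  -- two powers collide, hence `a` is idempotent
  have hkey : ∀ n m : ℕ, n < m → a ^ (n + 1) = a ^ (m + 1) → a * a = a := by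
    intro n m hlt heq
    have hc : (1 - a ^ (m - n)) * a ^ (n + 1) = 0 := by
      have hpow : a ^ (m - n) * a ^ (n + 1) = a ^ (m + 1) := by
        rw [← pow_add]; congr 1; omega
      rw [sub_mul, one_mul, hpow, heq, sub_self]
    have h2 := hstab n _ hc
    have ha' : a = a ^ (m - n) * a := by
      have h3 : a - a ^ (m - n) * a = 0 := by
        rw [show a - a ^ (m - n) * a = (1 - a ^ (m - n)) * a by ring]; exact h2
      exact (sub_eq_zero.mp h3)
    have hk1 : 1 ≤ m - n := by omega
    have heD : a ^ (m - n) ∈ D := by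
      have := hpowD (m - n - 1); rwa [show m - n - 1 + 1 = m - n by omega] at this
    have hep : a ^ (m - n) * p = 0 := by
      have h5 : a ^ (m - n) = a ^ (m - n - 1) * a := by
        rw [← pow_succ]; congr 1; omega
      rw [h5, show a ^ (m - n - 1) * a * p = a ^ (m - n - 1) * (p * a) by ring, hpa, mul_zero]
    have hea : a ^ (m - n) = a := by
      by_contra hne
      exact hpriv _ heD hne hep
    calc a * a = a ^ (m - n) * a := by rw [hea]
      _ = a := ha'.symm
  have hidem : a * a = a := by
    obtain ⟨n, -, m, -, hnm, heq⟩ :=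
      Set.infinite_univ (α := ℕ) |>.exists_ne_map_eq_of_mapsTo
        (f := fun n => a ^ (n + 1)) (fun n _ => hpowD n) hDfin
    rcases lt_or_gt_of_ne hnm with h | h
    · exact hkey n m h heq
    · exact hkey m n h heq.symm
  set f : R := 1 - a with hf
  have haf : a * f = 0 := by rw [hf, mul_sub, mul_one, hidem, sub_self]
  have hf0 : f ≠ 0 := by
    intro h
    have ha1 : a = 1 := by
      have := sub_eq_zero.mp h; exact this.symm
    apply hp0
    rw [ha1, mul_one] at hpa; exact hpa
  have hfa : f * a = 0 := by rw [mul_comm]; exact haf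
  have hff : f * f = f := by rw [hf]; linear_combination hidem
  -- every element of D other than a has nonzero f-component
  have hF2 : ∀ x ∈ D, x ≠ a → x * f ≠ 0 := by
    intro x hx hxa hxf
    apply hpriv x hx hxa
    have hpf : p * f = p := by rw [hf, mul_sub, mul_one, hpa, sub_zero]
    calc x * p = x * (p * f) := by rw [hpf]
      _ = (x * f) * p := by ring
      _ = 0 := by rw [hxf, zero_mul]
  -- F3 : a + w ∈ D for every zero divisor w of the ring fR
  have hF3 : ∀ w : R, w ≠ 0 → w * a = 0 →
      (∃ y, y ≠ 0 ∧ y * a = 0 ∧ w * y = 0) → a + w ∈ D := by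
    rintro w hw0 hwa ⟨y, hy0, hya, hwy⟩
    by_contra ht
    have hne : a + w ≠ 0 := by
      intro h
      apply ha0
      have h2 : a * (a + w) = 0 := by rw [h, mul_zero]
      rwa [mul_add, hidem, show a * w = w * a by ring, hwa, add_zero] at h2
    obtain ⟨x, hxD, hxt⟩ := hD.2 _ ⟨hne, y, hy0, by
      rw [add_mul, show a * y = y * a by ring, hya, hwy, add_zero]⟩ ht
    apply hbad x hxD
    have h2 : x * (a + w) * a = 0 := by rw [hxt, zero_mul]
    linear_combination h2 - x * hwa - x * hidem
  -- F5 : u + f ∈ D for every zero divisor u of the ring aR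
  have hF5 : ∀ u : R, u ≠ 0 → u * f = 0 →
      (∃ y, y ≠ 0 ∧ y * f = 0 ∧ u * y = 0) → u + f ∈ D := by
    rintro u hu0 huf ⟨y, hy0, hyf, huy⟩
    by_contra ht
    have hau : a * u = u := by
      have h2 : u - u * a = 0 := by rw [hf] at huf; linear_combination huf
      have h3 : u = u * a := sub_eq_zero.mp h2
      rw [mul_comm]; exact h3.symm
    have hne : u + f ≠ 0 := by
      intro h
      apply hu0
      have h2 : a * (u + f) = 0 := by rw [h, mul_zero]
      rwa [mul_add, hau, haf, add_zero] at h2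
    obtain ⟨x, hxD, hxt⟩ := hD.2 _ ⟨hne, y, hy0, by
      rw [add_mul, huy, show f * y = y * f by ring, hyf, add_zero]⟩ ht
    have hxa : x ≠ a := by
      intro h; rw [h] at hxt
      apply hu0
      have h3 : a * (u + f) = u := by rw [mul_add, hau, haf, add_zero]
      rw [← h3, hxt]
    apply hF2 x hxD hxa
    have h3 : (u + f) * f = f := by rw [add_mul, huf, hff, zero_add]
    calc x * f = x * ((u + f) * f) := by rw [h3]
      _ = x * (u + f) * f := by ring
      _ = 0 := by rw [hxt, zero_mul]
  -- the zero-divisor sets of the two factor rings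
  set Z₁ : Set R := {u | u ≠ 0 ∧ u * f = 0 ∧ ∃ y, y ≠ 0 ∧ y * f = 0 ∧ u * y = 0} with hZ₁def
  set Z₂ : Set R := {w | w ≠ 0 ∧ w * a = 0 ∧ ∃ y, y ≠ 0 ∧ y * a = 0 ∧ w * y = 0} with hZ₂def
  have hZ₁D : ∀ u ∈ Z₁, u + f ∈ D := fun u hu => hF5 u hu.1 hu.2.1 hu.2.2
  have hZ₂D : ∀ w ∈ Z₂, a + w ∈ D := fun w hw => hF3 w hw.1 hw.2.1 hw.2.2
  have himg1 : (fun u => u + f) '' Z₁ ⊆ D := by rintro _ ⟨u, hu, rfl⟩; exact hZ₁D u hu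
  have himg2 : (fun w => a + w) '' Z₂ ⊆ D := by rintro _ ⟨w, hw, rfl⟩; exact hZ₂D w hw
  have hfin1 : Z₁.Finite :=
    Set.Finite.of_finite_image (hDfin.subset himg1) (add_left_injective f).injOn
  have hfin2 : Z₂.Finite :=
    Set.Finite.of_finite_image (hDfin.subset himg2) (add_right_injective a).injOn
  -- disjointness facts giving the size lower bound on D
  have hdisj12 : Disjoint ((fun u => u + f) '' Z₁) ((fun w => a + w) '' Z₂) := by
    rw [Set.disjoint_left]
    rintro _ ⟨u, hu, rfl⟩ ⟨w, hw, heq2⟩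
    obtain ⟨hu0, huf, y, hy0, hyf, huy⟩ := hu
    have hua : u = a := by
      have h1 : u * a = a := by linear_combination -heq2 * a + hidem + hw.2.1 - hfa
      have h2 : u = u * a := sub_eq_zero.mp (by linear_combination huf)
      exact h2.trans h1
    apply hy0
    have h3 : y = y * a := sub_eq_zero.mp (by linear_combination hyf)
    calc y = y * a := h3
      _ = y * u := by rw [hua]
      _ = u * y := by ring
      _ = 0 := huy
  have hdisj0 : a ∉ ((fun u => u + f) '' Z₁ ∪ (fun w => a + w) '' Z₂) := by
    rintro (⟨u, hu, heq2⟩ | ⟨w, hw, heq2⟩)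
    · apply hf0
      have h1 : a * f = (u + f) * f := by rw [show u + f = a from heq2]
      rw [add_mul, hu.2.1, hff, zero_add] at h1
      rw [← h1, haf]
    · exact hw.1 (by linear_combination heq2)
  have hsub : insert a ((fun u => u + f) '' Z₁ ∪ (fun w => a + w) '' Z₂) ⊆ D := by
    rintro x hx
    rcases Set.mem_insert_iff.mp hx with rfl | hx'
    · exact haD
    · rcases hx' with h | h
      · exact himg1 h
      · exact himg2 h
  have hcard : 1 + Z₁.ncard + Z₂.ncard ≤ D.ncard := by
    have h1 := Set.ncard_le_ncard hsub hDfin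
    have hn1 : ((fun u => u + f) '' Z₁).ncard = Z₁.ncard :=
      Set.ncard_image_of_injective _ (add_left_injective f)
    have hn2 : ((fun w => a + w) '' Z₂).ncard = Z₂.ncard :=
      Set.ncard_image_of_injective _ (add_right_injective a)
    have hu : ((fun u => u + f) '' Z₁ ∪ (fun w => a + w) '' Z₂).ncard =
        Z₁.ncard + Z₂.ncard := by
      rw [Set.ncard_union_eq hdisj12 (hfin1.image _) (hfin2.image _), hn1, hn2]
    rw [Set.ncard_insert_of_notMem hdisj0 ((hfin1.image _).union (hfin2.image _)), hu] at h1
    omega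
  -- the generic total dominating set construction
  have hTot : ∀ T₁ T₂ : Set R, T₁.Nonempty → T₂.Nonempty →
      (∀ t ∈ T₁, t ≠ 0 ∧ t * f = 0) → (∀ t ∈ T₂, t ≠ 0 ∧ t * a = 0) →
      Z₁ ⊆ T₁ → Z₂ ⊆ T₂ → IsTotDomSet R (T₁ ∪ T₂) := by
    intro T₁ T₂ h1 h2 hT1 hT2 hZT1 hZT2
    constructor
    · rintro t (ht | ht)
      · exact ⟨(hT1 t ht).1, f, hf0, (hT1 t ht).2⟩
      · exact ⟨(hT2 t ht).1, a, ha0, (hT2 t ht).2⟩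
    · rintro v ⟨hv0, z, hz0, hvz⟩
      by_cases hva : a * v = 0
      · obtain ⟨t, ht⟩ := h1
        refine ⟨t, Or.inl ht, ?_⟩
        have hvf : v = f * v := by rw [hf]; linear_combination hva
        calc t * v = t * (f * v) := by rw [← hvf]
          _ = (t * f) * v := by ring
          _ = 0 := by rw [(hT1 t ht).2, zero_mul]
      · by_cases hvf : f * v = 0
        · obtain ⟨t, ht⟩ := h2
          refine ⟨t, Or.inr ht, ?_⟩
          have hva' : v = a * v := by rw [hf] at hvf; linear_combination hvf
          calc t * v = t * (a * v) := by rw [← hva']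
            _ = (t * a) * v := by ring
            _ = 0 := by rw [(hT2 t ht).2, zero_mul]
        · have hz12 : a * z ≠ 0 ∨ f * z ≠ 0 := by
            by_contra h
            push_neg at h
            apply hz0
            have hzz : z = a * z + f * z := by rw [hf]; ring
            rw [hzz, h.1, h.2, add_zero]
          rcases hz12 with hz1 | hz2
          · have hmem : a * z ∈ Z₁ := by
              refine ⟨hz1, by linear_combination z * haf, a * v, hva, by linear_combination v * haf, ?_⟩
              calc (a * z) * (a * v) = (a * a) * (v * z) := by ring
                _ = 0 := by rw [hvz, mul_zero]
            refine ⟨a * z, Or.inl (hZT1 hmem), ?_⟩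
            calc (a * z) * v = a * (v * z) := by ring
              _ = 0 := by rw [hvz, mul_zero]
          · have hmem : f * z ∈ Z₂ := by
              refine ⟨hz2, by linear_combination z * hfa, f * v, hvf, by linear_combination v * hfa, ?_⟩
              calc (f * z) * (f * v) = (f * f) * (v * z) := by ring
                _ = 0 := by rw [hvz, mul_zero]
            refine ⟨f * z, Or.inr (hZT2 hmem), ?_⟩
            calc (f * z) * v = f * (v * z) := by ring
              _ = 0 := by rw [hvz, mul_zero]
  -- now split according to emptiness of Z₁, Z₂
  have hconc : ∀ T : Set R, IsTotDomSet R T → T.Finite → T.ncard ≤ D.ncard →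
      totDomNum R ≤ (D.ncard : Cardinal) := by
    intro T hT hTfin hTc
    calc totDomNum R ≤ Cardinal.mk T := aux_totDomNum_le_mk hT
      _ = (T.ncard : Cardinal) := aux_mk_eq_ncard hTfin
      _ ≤ (D.ncard : Cardinal) := Nat.cast_le.mpr hTc
  by_cases hZ1e : Z₁ = ∅
  · by_cases hZ2e : Z₂ = ∅
    · -- both empty : Γ(R) is "complete bipartite", γ_t ≤ 2 < 4, contradiction
      exfalso
      have hT : IsTotDomSet R ({a} ∪ {f}) := by
        refine hTot {a} {f} ⟨a, rfl⟩ ⟨f, rfl⟩ ?_ ?_ (by rw [hZ1e]; exact Set.empty_subset _)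
          (by rw [hZ2e]; exact Set.empty_subset _)
        · rintro t rfl; exact ⟨ha0, haf⟩
        · rintro t rfl; exact ⟨hf0, hfa⟩
      have h2 : totDomNum R ≤ 2 := by
        calc totDomNum R ≤ Cardinal.mk ({a} ∪ {f} : Set R) := aux_totDomNum_le_mk hT
          _ = (({a} ∪ {f} : Set R).ncard : Cardinal) :=
              aux_mk_eq_ncard ((Set.finite_singleton a).union (Set.finite_singleton f))
          _ ≤ ((2 : ℕ) : Cardinal) := by
              apply Nat.cast_le.mpr
              calc ({a} ∪ {f} : Set R).ncard ≤ ({a} : Set R).ncard + ({f} : Set R).ncard :=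
                    Set.ncard_union_le _ _
                _ = 2 := by rw [Set.ncard_singleton, Set.ncard_singleton]
          _ = (2 : Cardinal) := by norm_num
      have : (4 : Cardinal) ≤ 2 := le_trans h4 h2
      have h42 : ¬ ((4 : Cardinal) ≤ 2) := by
        rw [show (4 : Cardinal) = ((4 : ℕ) : Cardinal) by norm_num,
            show (2 : Cardinal) = ((2 : ℕ) : Cardinal) by norm_num, Nat.cast_le]
        omega
      exact h42 this
    · -- Z₁ empty, Z₂ not
      have hZ2ne : Z₂.Nonempty := Set.nonempty_iff_ne_empty.mpr hZ2e
      have hT : IsTotDomSet R ({a} ∪ Z₂) := by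
        refine hTot {a} Z₂ ⟨a, rfl⟩ hZ2ne ?_ (fun t ht => ⟨ht.1, ht.2.1⟩)
          (by rw [hZ1e]; exact Set.empty_subset _) subset_rfl
        rintro t rfl; exact ⟨ha0, haf⟩
      refine hconc _ hT ((Set.finite_singleton a).union hfin2) ?_
      calc ({a} ∪ Z₂).ncard ≤ ({a} : Set R).ncard + Z₂.ncard := Set.ncard_union_le _ _
        _ = 1 + Z₂.ncard := by rw [Set.ncard_singleton]
        _ ≤ D.ncard := by have := hcard; omega
  · by_cases hZ2e : Z₂ = ∅
    · have hZ1ne : Z₁.Nonempty := Set.nonempty_iff_ne_empty.mpr hZ1e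
      have hT : IsTotDomSet R (Z₁ ∪ {f}) := by
        refine hTot Z₁ {f} hZ1ne ⟨f, rfl⟩ (fun t ht => ⟨ht.1, ht.2.1⟩) ?_
          subset_rfl (by rw [hZ2e]; exact Set.empty_subset _)
        rintro t rfl; exact ⟨hf0, hfa⟩
      refine hconc _ hT (hfin1.union (Set.finite_singleton f)) ?_
      calc (Z₁ ∪ {f}).ncard ≤ Z₁.ncard + ({f} : Set R).ncard := Set.ncard_union_le _ _
        _ = Z₁.ncard + 1 := by rw [Set.ncard_singleton]
        _ ≤ D.ncard := by have := hcard; omega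
    · have hZ1ne : Z₁.Nonempty := Set.nonempty_iff_ne_empty.mpr hZ1e
      have hZ2ne : Z₂.Nonempty := Set.nonempty_iff_ne_empty.mpr hZ2e
      have hT : IsTotDomSet R (Z₁ ∪ Z₂) :=
        hTot Z₁ Z₂ hZ1ne hZ2ne (fun t ht => ⟨ht.1, ht.2.1⟩) (fun t ht => ⟨ht.1, ht.2.1⟩)
          subset_rfl subset_rfl
      refine hconc _ hT (hfin1.union hfin2) ?_
      calc (Z₁ ∪ Z₂).ncard ≤ Z₁.ncard + Z₂.ncard := Set.ncard_union_le _ _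
        _ ≤ D.ncard := by have := hcard; omega

/-- The descent step: replace a bad element `a` by a suitable `b`, decreasing the
set of bad elements. -/
private lemma aux_descent {R : Type*} [CommRing R] {D : Set R} (hDfin : D.Finite)
    (hD : IsDomSet R D) {a b : R} (haD : a ∈ D) (hbad : ∀ y ∈ D, y * a ≠ 0)
    (hb0 : b ≠ 0) (hba : b * a = 0)
    (hcov : ∀ v ∈ zdVerts R, v ∉ D → v ≠ b → v * a = 0 →
      ∃ x, (x ∈ D ∧ x ≠ a ∨ x = b) ∧ x * v = 0)
    (hbg : ∃ x, (x ∈ D ∧ x ≠ a ∨ x = b) ∧ x * b = 0) :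
    ∃ D' : Set R, D'.Finite ∧ IsDomSet R D' ∧ D'.ncard ≤ D.ncard ∧
      {x ∈ D' | ∀ y ∈ D', y * x ≠ 0} ⊆ {x ∈ D | ∀ y ∈ D, y * x ≠ 0} \ {a} := by
  classical
  have ha0 : a ≠ 0 := (hD.1 haD).1
  have hmem : ∀ x : R, (x ∈ D ∧ x ≠ a ∨ x = b) → x ∈ insert b (D \ {a}) := by
    rintro x (⟨h1, h2⟩ | rfl)
    · exact Set.mem_insert_iff.mpr (Or.inr ⟨h1, h2⟩)
    · exact Set.mem_insert _ _
  refine ⟨insert b (D \ {a}), (hDfin.diff).insert b, ⟨?_, ?_⟩, ?_, ?_⟩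
  · rintro x hx
    rcases Set.mem_insert_iff.mp hx with rfl | ⟨hxD, -⟩
    · exact ⟨hb0, a, ha0, hba⟩
    · exact hD.1 hxD
  · intro v hv hvD'
    have hvb : v ≠ b := fun h => hvD' (by rw [h]; exact Set.mem_insert b _)
    by_cases hvA : v = a
    · exact ⟨b, Set.mem_insert b _, by rw [hvA]; exact hba⟩
    · have hvD : v ∉ D := fun h => hvD' (Set.mem_insert_iff.mpr (Or.inr ⟨h, hvA⟩))
      obtain ⟨x, hxD, hxv⟩ := hD.2 v hv hvD
      by_cases hxa : x = a
      · have hva : v * a = 0 := by rw [hxa] at hxv; rw [mul_comm]; exact hxv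
        obtain ⟨x', hx', hx'v⟩ := hcov v hv hvD hvb hva
        exact ⟨x', hmem x' hx', hx'v⟩
      · exact ⟨x, Set.mem_insert_iff.mpr (Or.inr ⟨hxD, hxa⟩), hxv⟩
  · calc (insert b (D \ {a})).ncard ≤ (D \ {a}).ncard + 1 := Set.ncard_insert_le _ _
      _ = D.ncard := Set.ncard_diff_singleton_add_one haD hDfin
  · rintro x ⟨hxD', hxbad⟩
    have hxb : x ≠ b := by
      rintro rfl
      obtain ⟨x', hx', hx'b⟩ := hbg
      exact hxbad x' (hmem x' hx') hx'b
    have hxD : x ∈ D \ {a} := by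
      rcases Set.mem_insert_iff.mp hxD' with h | h
      · exact absurd h hxb
      · exact h
    refine ⟨⟨hxD.1, ?_⟩, hxD.2⟩
    intro y hyD hyx
    by_cases hya : y = a
    · exact hbad x hxD.1 (by rw [hya] at hyx; rw [mul_comm]; exact hyx)
    · exact hxbad y (Set.mem_insert_iff.mpr (Or.inr ⟨hyD, hya⟩)) hyx

/-- Key lemma: any finite dominating set is at least as large as γ_t, provided γ_t ≥ 4. -/
private lemma aux_key {R : Type*} [CommRing R] (h4 : 4 ≤ totDomNum R) :
    ∀ (n : ℕ) (D : Set R), D.Finite → IsDomSet R D →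
      {x ∈ D | ∀ y ∈ D, y * x ≠ 0}.ncard ≤ n → totDomNum R ≤ (D.ncard : Cardinal) := by
  intro n
  induction n with
  | zero =>
    intro D hDfin hD hB
    by_cases hall : ∀ x ∈ D, ∃ y ∈ D, y * x = 0
    · have hT : IsTotDomSet R D := by
        refine ⟨hD.1, fun v hv => ?_⟩
        by_cases h : v ∈ D
        · exact hall v h
        · exact hD.2 v hv h
      calc totDomNum R ≤ Cardinal.mk D := aux_totDomNum_le_mk hT
        _ = (D.ncard : Cardinal) := aux_mk_eq_ncard hDfin
    · exfalso
      push_neg at hall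
      obtain ⟨a, haD, hbad⟩ := hall
      have haB : a ∈ {x ∈ D | ∀ y ∈ D, y * x ≠ 0} := ⟨haD, hbad⟩
      have hBfin : {x ∈ D | ∀ y ∈ D, y * x ≠ 0}.Finite := hDfin.subset (Set.sep_subset _ _)
      rw [Nat.le_zero, Set.ncard_eq_zero hBfin] at hB
      rw [hB] at haB
      exact Set.notMem_empty a haB
  | succ n ih =>
    intro D hDfin hD hB
    by_cases hall : ∀ x ∈ D, ∃ y ∈ D, y * x = 0
    · have hT : IsTotDomSet R D := by
        refine ⟨hD.1, fun v hv => ?_⟩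
        by_cases h : v ∈ D
        · exact hall v h
        · exact hD.2 v hv h
      calc totDomNum R ≤ Cardinal.mk D := aux_totDomNum_le_mk hT
        _ = (D.ncard : Cardinal) := aux_mk_eq_ncard hDfin
    · push_neg at hall
      obtain ⟨a, haD, hbad⟩ := hall
      have haB : a ∈ {x ∈ D | ∀ y ∈ D, y * x ≠ 0} := ⟨haD, hbad⟩
      have hBfin : {x ∈ D | ∀ y ∈ D, y * x ≠ 0}.Finite := hDfin.subset (Set.sep_subset _ _)
      have hfinish : ∀ b : R, b ≠ 0 → b * a = 0 →
          (∀ v ∈ zdVerts R, v ∉ D → v ≠ b → v * a = 0 →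
            ∃ x, (x ∈ D ∧ x ≠ a ∨ x = b) ∧ x * v = 0) →
          (∃ x, (x ∈ D ∧ x ≠ a ∨ x = b) ∧ x * b = 0) →
          totDomNum R ≤ (D.ncard : Cardinal) := by
        intro b hb0 hba hcov hbg
        obtain ⟨D', hD'fin, hD', hcard, hBsub⟩ :=
          aux_descent hDfin hD haD hbad hb0 hba hcov hbg
        have hBcard : {x ∈ D' | ∀ y ∈ D', y * x ≠ 0}.ncard ≤ n := by
          have h1 : {x ∈ D' | ∀ y ∈ D', y * x ≠ 0}.ncard ≤
              ({x ∈ D | ∀ y ∈ D, y * x ≠ 0} \ {a}).ncard :=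
            Set.ncard_le_ncard hBsub (hBfin.diff)
          have h2 : ({x ∈ D | ∀ y ∈ D, y * x ≠ 0} \ {a}).ncard + 1 =
              {x ∈ D | ∀ y ∈ D, y * x ≠ 0}.ncard :=
            Set.ncard_diff_singleton_add_one haB hBfin
          omega
        calc totDomNum R ≤ (D'.ncard : Cardinal) := ih D' hD'fin hD' hBcard
          _ ≤ (D.ncard : Cardinal) := Nat.cast_le.mpr hcard
      by_cases hc : ∃ c, c * a ^ 2 = 0 ∧ c * a ≠ 0
      · obtain ⟨c, hca2, hca⟩ := hc
        apply hfinish (c * a) hca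
          (by rw [show c * a * a = c * a ^ 2 by ring]; exact hca2)
        · intro v hv hvD hvb hva
          refine ⟨c * a, Or.inr rfl, ?_⟩
          calc c * a * v = c * (v * a) := by ring
            _ = 0 := by rw [hva, mul_zero]
        · refine ⟨c * a, Or.inr rfl, ?_⟩
          rw [show (c * a) * (c * a) = (c * c) * a ^ 2 by ring,
              show (c * c) * a ^ 2 = c * (c * a ^ 2) by ring, hca2, mul_zero]
      · by_cases hP : ∃ p, p ∉ D ∧ p * a = 0 ∧ p ≠ 0 ∧ ∀ x ∈ D, x ≠ a → x * p ≠ 0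
        · obtain ⟨p, h1, h2, h3, h5⟩ := hP
          push_neg at hc
          exact aux_stuck h4 hDfin hD haD hbad hc h1 h2 h3 h5
        · push_neg at hP
          obtain ⟨ha0, y₀, hy₀0, hay₀⟩ := hD.1 haD
          have hy₀a : y₀ * a = 0 := by rw [mul_comm]; exact hay₀
          have hy₀D : y₀ ∉ D := fun h => hbad y₀ h hy₀a
          apply hfinish y₀ hy₀0 hy₀a
          · intro v hv hvD hvb hva
            obtain ⟨x, hxD, hxa, hxv⟩ := hP v hvD hva hv.1
            exact ⟨x, Or.inl ⟨hxD, hxa⟩, hxv⟩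
          · obtain ⟨x, hxD, hxa, hxy⟩ := hP y₀ hy₀D hy₀a hy₀0
            exact ⟨x, Or.inl ⟨hxD, hxa⟩, hxy⟩

theorem stmt_16 (R : Type*) [CommRing R]
    (h4 : 4 ≤ totDomNum R) (hfin : totDomNum R < Cardinal.aleph0) :
    domNum R = totDomNum R := by
  classical
  haveI hne : Nonempty {X : Set R // IsTotDomSet R X} := by
    by_contra h
    rw [not_nonempty_iff] at h
    rw [totDomNum, iInf_of_isEmpty, Cardinal.sInf_empty] at h4
    norm_num at h4
  obtain ⟨X₀⟩ := id hne
  haveI hDexists : Nonempty {X : Set R // IsDomSet R X} := ⟨⟨X₀.1, aux_tot_isDom X₀.2⟩⟩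
  obtain ⟨⟨D, hD⟩, hDeq⟩ :=
    csInf_mem (Set.range_nonempty (fun X : {X : Set R // IsDomSet R X} => Cardinal.mk X.1))
  have hDcard : Cardinal.mk D = domNum R := by
    rw [domNum, iInf]; exact hDeq
  have easy : domNum R ≤ totDomNum R :=
    le_ciInf fun X => ciInf_le (OrderBot.bddBelow _)
      (⟨X.1, aux_tot_isDom X.2⟩ : {X : Set R // IsDomSet R X})
  have hDfin : D.Finite := by
    rw [← Cardinal.lt_aleph0_iff_set_finite, hDcard]
    exact lt_of_le_of_lt easy hfin
  have hard : totDomNum R ≤ domNum R := by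
    have h1 := aux_key h4 ({x ∈ D | ∀ y ∈ D, y * x ≠ 0}.ncard) D hDfin hD le_rfl
    rw [← hDcard, aux_mk_eq_ncard hDfin]
    exact h1
  exact le_antisymm easy hard
end
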